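/- Let Γ be a curve of class LR with arc-length parametrization z(s), 0 ≤ s ≤ S, let θ = β − α have jumps h_k at points s_k, and let ρ(z(s)) = Π_{k=1}^{m}|s − t_k|^{α_k} with distinct points {t_k} ⊂ (0,S). If the combined exponents β_k = −(p/2π)Σᵢ h_i χ_{T_k}(s_i) + Σᵢ α_i χ_{T_k}(t_i), k = 1,…,l, satisfy −1 < β_k < p/q, then the weight ρ satisfies condition α): there exist p₁, p₂ ∈ (1,∞) such that ∫₀^S σ^{pp₁}(s)ρ^{p₁}(z(s))ds < ∞ and ∫₀^S σ^{−qp₂}(s)ρ^{−(q/p)p₂}(z(s))ds < ∞. -/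

import Mathlib

open Complex MeasureTheory Metric Set Filter Bornology
open scoped Topology

noncomputable section

/-- Stolz-type non-tangential approach region of aperture `α` at the boundary point `ξ`
of the region `D`. -/
def stolzRegion (D : Set ℂ) (ξ : ℂ) (α : ℝ) : Set ℂ :=
  {z ∈ D | dist z ξ < (1 + α) * Metric.infDist z Dᶜ}

/-- `f` has non-tangential limit `L` at the boundary point `ξ` of the region `D`. -/
def NTLim (D : Set ℂ) (f : ℂ → ℂ) (ξ : ℂ) (L : ℂ) : Prop :=
  ∀ α > 0, Filter.Tendsto f (𝓝[stolzRegion D ξ α] ξ) (𝓝 L)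

/-- A closed rectifiable Jordan curve of length `S`, given by its (1-Lipschitz)
arclength parametrization. -/
structure JordanCurve where
  toFun : ℝ → ℂ
  S : ℝ
  S_pos : 0 < S
  lipschitz : LipschitzWith 1 toFun
  injOn : Set.InjOn toFun (Set.Ico 0 S)
  periodic : Function.Periodic toFun S

namespace JordanCurve

/-- the point set of the curve -/
def carrier (Γ : JordanCurve) : Set ℂ := Γ.toFun '' Set.Icc 0 Γ.S

/-- the weighted `L^p(Γ, ρ)`-norm of a function given in the arclength parameter -/
def lpNorm (Γ : JordanCurve) (ρ : ℂ → ℝ) (p : ℝ) (g : ℝ → ℂ) : ℝ :=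
  (∫ s in (0:ℝ)..Γ.S, ‖g s‖ ^ p * ρ (Γ.toFun s)) ^ (1 / p)

/-- membership in the weighted Lebesgue space `L_{p,ρ}(Γ)` -/
def MemLpW (Γ : JordanCurve) (ρ : ℂ → ℝ) (p : ℝ) (g : ℝ → ℂ) : Prop :=
  MeasureTheory.AEStronglyMeasurable g (volume.restrict (Set.Icc 0 Γ.S)) ∧
  MeasureTheory.IntegrableOn (fun s => ‖g s‖ ^ p * ρ (Γ.toFun s)) (Set.Icc 0 Γ.S)

/-- Carleson (regular) curve: `|Γ ∩ O_r(z)| ≤ c r`. -/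
def IsCarleson (Γ : JordanCurve) : Prop :=
  ∃ c : ℝ, ∀ w ∈ Γ.carrier, ∀ r > 0,
    (volume {s : ℝ | s ∈ Set.Icc 0 Γ.S ∧ Γ.toFun s ∈ Metric.ball w r}).toReal ≤ c * r

/-- the Muckenhoupt `A_p(Γ)` condition for a weight on the curve -/
def MuckenhouptOn (Γ : JordanCurve) (ρ : ℂ → ℝ) (p : ℝ) : Prop :=
  ∃ C : ℝ, ∀ w ∈ Γ.carrier, ∀ r > 0,
    (r⁻¹ * ∫ s in {s : ℝ | s ∈ Set.Icc 0 Γ.S ∧ Γ.toFun s ∈ Metric.ball w r}, ρ (Γ.toFun s)) *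
      (r⁻¹ * ∫ s in {s : ℝ | s ∈ Set.Icc 0 Γ.S ∧ Γ.toFun s ∈ Metric.ball w r},
          |ρ (Γ.toFun s)| ^ (-(1:ℝ) / (p - 1))) ^ (p - 1) ≤ C

end JordanCurve

/-- the Muckenhoupt `A_p` condition for a weight on `[-π,π]` (equivalently, on the unit circle) -/
def MuckenhouptT (ν : ℝ → ℝ) (p : ℝ) : Prop :=
  ∃ C : ℝ, ∀ a b : ℝ, -Real.pi ≤ a → a < b → b ≤ Real.pi →
    ((b - a)⁻¹ * ∫ t in a..b, ν t) *
      ((b - a)⁻¹ * ∫ t in a..b, |ν t| ^ (-(1:ℝ) / (p - 1))) ^ (p - 1) ≤ C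

/-- the unbounded complementary region `D⁻` of the bounded region `D⁺` -/
def exteriorRegion (Dp : Set ℂ) : Set ℂ := (closure Dp)ᶜ

/-- `D⁺` is the bounded simply connected region bounded by the curve `Γ` -/
def BoundsRegion (Γ : JordanCurve) (Dp : Set ℂ) : Prop :=
  IsOpen Dp ∧ Bornology.IsBounded Dp ∧ IsConnected Dp ∧ frontier Dp = Γ.carrier

/-- the open unit disc `ω` -/
def unitDisc : Set ℂ := Metric.ball 0 1

/-- the exterior of the closed unit disc -/
def unitDiscExt : Set ℂ := {z : ℂ | 1 < ‖z‖}

/-- membership in the Hardy class `H_p^+` of the unit disc -/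
def MemHardyPlus (p : ℝ) (f : ℂ → ℂ) : Prop :=
  DifferentiableOn ℂ f unitDisc ∧
  ∃ C : ℝ, ∀ r ∈ Set.Ico (0:ℝ) 1,
    (∫ t in (-Real.pi)..Real.pi, ‖f (r * Complex.exp (Complex.I * t))‖ ^ p) ≤ C

/-- `fb t` is, for a.e. `t`, the non-tangential boundary value of `f` at `e^{it}`
from inside the unit disc -/
def HasNTBoundaryIn (f : ℂ → ℂ) (fb : ℝ → ℂ) : Prop :=
  ∀ᵐ (t : ℝ) ∂(volume.restrict (Set.Icc (-Real.pi) Real.pi)),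
    NTLim unitDisc f (Complex.exp (Complex.I * t)) (fb t)

/-- `fb t` is, for a.e. `t`, the non-tangential boundary value of `f` at `e^{it}`
from outside the unit disc -/
def HasNTBoundaryOut (f : ℂ → ℂ) (fb : ℝ → ℂ) : Prop :=
  ∀ᵐ (t : ℝ) ∂(volume.restrict (Set.Icc (-Real.pi) Real.pi)),
    NTLim unitDiscExt f (Complex.exp (Complex.I * t)) (fb t)

/-- the norm of the weighted Lebesgue space `L_{p,ν}(-π,π)` -/
def lpNormT (ν : ℝ → ℝ) (p : ℝ) (g : ℝ → ℂ) : ℝ :=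
  (∫ t in (-Real.pi)..Real.pi, ‖g t‖ ^ p * ν t) ^ (1 / p)

/-- membership in the weighted Lebesgue space `L_{p,ν}(-π,π)` -/
def MemLpT (ν : ℝ → ℝ) (p : ℝ) (g : ℝ → ℂ) : Prop :=
  MeasureTheory.AEStronglyMeasurable g (volume.restrict (Set.Icc (-Real.pi) Real.pi)) ∧
  MeasureTheory.IntegrableOn (fun t => ‖g t‖ ^ p * ν t) (Set.Icc (-Real.pi) Real.pi)

/-- membership of `f`, with boundary values `fb`, in the weighted Hardy space `H⁺_{p,ν}`:
`f ∈ H₁⁺` and the boundary values belong to `L_{p,ν}` -/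
def MemHardyPlusW (p : ℝ) (ν : ℝ → ℝ) (f : ℂ → ℂ) (fb : ℝ → ℂ) : Prop :=
  MemHardyPlus 1 f ∧ HasNTBoundaryIn f fb ∧ MemLpT ν p fb

/-- membership in the Hardy class `ₘH_p⁻`: `f` is analytic outside the unit disc and has a
Laurent expansion `Σ_{k ≤ m} a_k z^k` at infinity, i.e. `f(1/w) = w^{-m} g(w)` with
`g` in the Hardy class of the disc. -/
def MemHardyMinus (p : ℝ) (m : ℤ) (f : ℂ → ℂ) : Prop :=
  DifferentiableOn ℂ f unitDiscExt ∧
  ∃ g : ℂ → ℂ, MemHardyPlus p g ∧ ∀ w ∈ unitDisc, w ≠ 0 → f w⁻¹ = w ^ (-m) * g w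

/-- membership of `f`, with boundary values `fb`, in the weighted Hardy space `ₘH⁻_{p,ν}` -/
def MemHardyMinusW (p : ℝ) (ν : ℝ → ℝ) (m : ℤ) (f : ℂ → ℂ) (fb : ℝ → ℂ) : Prop :=
  MemHardyMinus 1 m f ∧ HasNTBoundaryOut f fb ∧ MemLpT ν p fb

namespace JordanCurve

/-- `fb s` is, for a.e. `s`, the non-tangential boundary value of `f` at `Γ(s)`
relative to the region `D` -/
def HasNTBoundary (Γ : JordanCurve) (D : Set ℂ) (f : ℂ → ℂ) (fb : ℝ → ℂ) : Prop :=
  ∀ᵐ s ∂(volume.restrict (Set.Icc 0 Γ.S)), NTLim D f (Γ.toFun s) (fb s)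

/-- the Cauchy integral over the curve of a density given in the arclength parameter -/
def cauchyIntegral (Γ : JordanCurve) (g : ℝ → ℂ) (z : ℂ) : ℂ :=
  (2 * Real.pi * Complex.I)⁻¹ *
    ∫ s in (0:ℝ)..Γ.S, g s * deriv Γ.toFun s / (Γ.toFun s - z)

/-- membership in the Smirnov class `E₁(D⁺)` together with the boundary values `fb`:
`f` is analytic in `D⁺`, has non-tangential boundary values `fb ∈ L₁(Γ)`, and is
the Cauchy integral of its boundary values. -/
def MemSmirnovPlus (Γ : JordanCurve) (Dp : Set ℂ) (f : ℂ → ℂ) (fb : ℝ → ℂ) : Prop :=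
  DifferentiableOn ℂ f Dp ∧ Γ.HasNTBoundary Dp f fb ∧
  MeasureTheory.IntegrableOn fb (Set.Icc 0 Γ.S) ∧
  ∀ z ∈ Dp, f z = Γ.cauchyIntegral fb z

/-- membership in the Smirnov class `ₘE₁(D⁻)` (Laurent expansion `Σ_{k ≤ m} a_k z^k`
at infinity) together with the boundary values `fb`. -/
def MemSmirnovMinus (Γ : JordanCurve) (Dm : Set ℂ) (m : ℤ) (f : ℂ → ℂ) (fb : ℝ → ℂ) : Prop :=
  DifferentiableOn ℂ f Dm ∧ Γ.HasNTBoundary Dm f fb ∧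
  MeasureTheory.IntegrableOn fb (Set.Icc 0 Γ.S) ∧
  ∃ Q : Polynomial ℂ, (m < 0 → Q = 0) ∧ (0 ≤ m → (Q.natDegree : ℤ) ≤ m) ∧
    ∀ z ∈ Dm, f z = Q.eval z - Γ.cauchyIntegral fb z

/-- membership in the weighted Smirnov class `E_{p,ρ}(D⁺)` -/
def MemSmirnovPlusW (Γ : JordanCurve) (Dp : Set ℂ) (ρ : ℂ → ℝ) (p : ℝ)
    (f : ℂ → ℂ) (fb : ℝ → ℂ) : Prop :=
  Γ.MemSmirnovPlus Dp f fb ∧ Γ.MemLpW ρ p fb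

/-- membership in the weighted Smirnov class `ₘE_{p,ρ}(D⁻)` -/
def MemSmirnovMinusW (Γ : JordanCurve) (Dm : Set ℂ) (ρ : ℂ → ℝ) (p : ℝ) (m : ℤ)
    (f : ℂ → ℂ) (fb : ℝ → ℂ) : Prop :=
  Γ.MemSmirnovMinus Dm m f fb ∧ Γ.MemLpW ρ p fb

end JordanCurve

/-- `φ : D⁻ → {|w|>1}` is the conformal map with `φ(∞) = ∞`, `φ'(∞) = γ > 0`,
and `φinv` is its inverse. -/
structure IsOuterMap (Dp : Set ℂ) (φ φinv : ℂ → ℂ) : Prop where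
  diff : DifferentiableOn ℂ φ (exteriorRegion Dp)
  maps : Set.MapsTo φ (exteriorRegion Dp) unitDiscExt
  diff_inv : DifferentiableOn ℂ φinv unitDiscExt
  maps_inv : Set.MapsTo φinv unitDiscExt (exteriorRegion Dp)
  left_inv : ∀ z ∈ exteriorRegion Dp, φinv (φ z) = z
  right_inv : ∀ w ∈ unitDiscExt, φ (φinv w) = w
  deriv_infty : ∃ γ : ℝ, 0 < γ ∧
    Filter.Tendsto (fun z => φ z / z) (Bornology.cobounded ℂ) (𝓝 (γ : ℂ))

/-- `ψ : D⁺ → {|w|>1}` is the conformal map with `ψ(0) = ∞`, `lim_{z→0} z ψ(z) = α > 0`,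
and `ψinv` is its inverse. -/
structure IsInnerMap (Dp : Set ℂ) (ψ ψinv : ℂ → ℂ) : Prop where
  diff : DifferentiableOn ℂ ψ (Dp \ {0})
  maps : Set.MapsTo ψ (Dp \ {0}) unitDiscExt
  diff_inv : DifferentiableOn ℂ ψinv unitDiscExt
  maps_inv : Set.MapsTo ψinv unitDiscExt (Dp \ {0})
  left_inv : ∀ z ∈ Dp \ {0}, ψinv (ψ z) = z
  right_inv : ∀ w ∈ unitDiscExt, ψ (ψinv w) = w
  pole_zero : ∃ α : ℝ, 0 < α ∧
    Filter.Tendsto (fun z => z * ψ z) (𝓝[≠] (0:ℂ)) (𝓝 (α : ℂ))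

/-- `Fp n` is the generalized `p`-Faber polynomial `F⁺_{p,n}`: the principal part at `∞` of
`φ(z)ⁿ φp(z)`, where `φp` is the analytic branch of `(φ')^{1/p}` positive at infinity. -/
structure IsFaberPlus (Dp : Set ℂ) (p : ℝ) (φ φp : ℂ → ℂ) (Fp : ℕ → Polynomial ℂ) : Prop where
  branch_diff : DifferentiableOn ℂ φp (exteriorRegion Dp)
  branch_abs : ∀ z ∈ exteriorRegion Dp, ‖φp z‖ = ‖deriv φ z‖ ^ (1 / p)
  branch_infty : ∃ c : ℝ, 0 < c ∧
    Filter.Tendsto φp (Bornology.cobounded ℂ) (𝓝 (c : ℂ))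
  principal : ∀ n : ℕ, Filter.Tendsto
    (fun z => φ z ^ n * φp z - (Fp n).eval z) (Bornology.cobounded ℂ) (𝓝 0)
  degree_le : ∀ n, (Fp n).natDegree ≤ n
  zeroth : Fp 0 = 1

/-- `Fm n` encodes the generalized `p`-Faber polynomial `F⁻_{p,n}` (a polynomial in `z⁻¹`
without constant term, evaluated as `(Fm n).eval z⁻¹`): the principal part at `0` of
`G n = ψ^{n-2/p} (ψ')^{1/p}`. -/
structure IsFaberMinus (Dp : Set ℂ) (p : ℝ) (ψ : ℂ → ℂ) (G : ℕ → ℂ → ℂ)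
    (Fm : ℕ → Polynomial ℂ) : Prop where
  branch_diff : ∀ n, DifferentiableOn ℂ (G n) (Dp \ {0})
  branch_abs : ∀ n, ∀ z ∈ Dp \ {0},
    ‖G n z‖ = ‖ψ z‖ ^ ((n : ℝ) - 2 / p) * ‖deriv ψ z‖ ^ (1 / p)
  principal : ∀ n : ℕ, ∃ L : ℂ,
    Filter.Tendsto (fun z => G n z - (Fm n).eval z⁻¹) (𝓝[≠] (0:ℂ)) (𝓝 L)
  degree_le : ∀ n, (Fm n).natDegree ≤ n
  no_const : ∀ n, (Fm n).coeff 0 = 0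

namespace JordanCurve

/-- the system `{F⁺_{p,n}}_{n ∈ ℤ₊}` is a (Schauder) basis of `E_{p,ρ}(D⁺)`:
every member has a unique norm-convergent expansion. -/
def FaberPlusBasis (Γ : JordanCurve) (Dp : Set ℂ) (ρ : ℂ → ℝ) (p : ℝ)
    (Fp : ℕ → Polynomial ℂ) : Prop :=
  ∀ f fb, Γ.MemSmirnovPlusW Dp ρ p f fb →
    ∃! a : ℕ → ℂ,
      Filter.Tendsto (fun N : ℕ => Γ.lpNorm ρ p
          (fun s => fb s - ∑ n ∈ Finset.range N, a n * (Fp n).eval (Γ.toFun s)))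
        Filter.atTop (𝓝 0)

/-- the system `{F⁻_{p,n}}_{n ∈ ℕ}` is a (Schauder) basis of `₋₁E_{p,ρ}(D⁻)` -/
def FaberMinusBasis (Γ : JordanCurve) (Dp : Set ℂ) (ρ : ℂ → ℝ) (p : ℝ)
    (Fm : ℕ → Polynomial ℂ) : Prop :=
  ∀ f fb, Γ.MemSmirnovMinusW (exteriorRegion Dp) ρ p (-1) f fb →
    ∃! a : ℕ → ℂ, a 0 = 0 ∧
      Filter.Tendsto (fun N : ℕ => Γ.lpNorm ρ p
          (fun s => fb s - ∑ n ∈ Finset.Icc 1 N, a n * (Fm n).eval ((Γ.toFun s)⁻¹)))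
        Filter.atTop (𝓝 0)

/-- a double system `{u_n ; v_k}_{n ≥ 0, k ≥ 1}` of functions on the curve is a basis of
`L_{p,ρ}(Γ)`: every member has a unique norm-convergent double expansion. -/
def DoubleBasis (Γ : JordanCurve) (ρ : ℂ → ℝ) (p : ℝ) (u v : ℕ → ℝ → ℂ) : Prop :=
  ∀ fb, Γ.MemLpW ρ p fb →
    ∃! c : (ℕ → ℂ) × (ℕ → ℂ), c.2 0 = 0 ∧
      Filter.Tendsto (fun NM : ℕ × ℕ => Γ.lpNorm ρ p
          (fun s => fb s - ∑ n ∈ Finset.range NM.1, c.1 n * u n s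
            - ∑ k ∈ Finset.Icc 1 NM.2, c.2 k * v k s))
        Filter.atTop (𝓝 0)

end JordanCurve

/-- jump data of a piecewise continuous function `θ` on `[0,S]`: the interior discontinuity
points are `sk i`, `1 ≤ i ≤ r`, with jumps `h i`; `h 0` is the jump at the endpoint
(`sk 0 = 0`). -/
structure HasJumpData (θ : ℝ → ℝ) (S : ℝ) (r : ℕ) (sk h : ℕ → ℝ) : Prop where
  sk_zero : sk 0 = 0
  mem : ∀ i, 1 ≤ i → i ≤ r → sk i ∈ Set.Ioo 0 S
  mono : ∀ i j, 1 ≤ i → i < j → j ≤ r → sk i < sk j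
  cont : ContinuousOn θ ((Set.Ioo 0 S) \ {x | ∃ i, 1 ≤ i ∧ i ≤ r ∧ sk i = x})
  jump : ∀ i, 1 ≤ i → i ≤ r → ∃ L : ℝ,
    Filter.Tendsto θ (𝓝[<] (sk i)) (𝓝 L) ∧ Filter.Tendsto θ (𝓝[>] (sk i)) (𝓝 (L + h i))
  jump_end : ∃ L : ℝ,
    Filter.Tendsto θ (𝓝[<] S) (𝓝 L) ∧ Filter.Tendsto θ (𝓝[>] (0:ℝ)) (𝓝 (L + h 0))

/-- `σ(s) = |z(0)-z(s)|^{-h₀/2π} Π_k |z(s_k)-z(s)|^{-h_k/2π}` -/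
def sigmaWeight (Γ : JordanCurve) (r : ℕ) (sk h : ℕ → ℝ) (s : ℝ) : ℝ :=
  ∏ k ∈ Finset.range (r + 1),
    ‖Γ.toFun (sk k) - Γ.toFun s‖ ^ (-(h k) / (2 * Real.pi))

/-- condition α): `σ^{p p₁} ρ^{p₁}` and `σ^{-q p₂} ρ^{-(q/p) p₂}` are integrable for some
`p₁, p₂ ∈ (1,∞)`. -/
def CondAlpha (Γ : JordanCurve) (ρ : ℂ → ℝ) (p q : ℝ) (r : ℕ) (sk h : ℕ → ℝ) : Prop :=
  ∃ p₁ p₂ : ℝ, 1 < p₁ ∧ 1 < p₂ ∧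
    MeasureTheory.IntegrableOn
      (fun s => sigmaWeight Γ r sk h s ^ (p * p₁) * ρ (Γ.toFun s) ^ p₁)
      (Set.Icc 0 Γ.S) ∧
    MeasureTheory.IntegrableOn
      (fun s => sigmaWeight Γ r sk h s ^ (-(q * p₂)) * ρ (Γ.toFun s) ^ (-(q / p) * p₂))
      (Set.Icc 0 Γ.S)

/-- conditions i)–ii) on the coefficients `A = |A|e^{iα}`, `B = |B|e^{iβ}`:
moduli essentially bounded above and away from zero, arguments piecewise continuous;
`θ = β - α` has jump data `(r, sk, h)`. -/
structure AdmissibleCoeffs (Γ : JordanCurve) (A B : ℂ → ℂ) (aArg bArg : ℝ → ℝ)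
    (r : ℕ) (sk h : ℕ → ℝ) : Prop where
  bddA : ∃ C : ℝ, 0 < C ∧ ∀ s ∈ Set.Icc 0 Γ.S,
    ‖A (Γ.toFun s)‖ ≤ C ∧ C⁻¹ ≤ ‖A (Γ.toFun s)‖
  bddB : ∃ C : ℝ, 0 < C ∧ ∀ s ∈ Set.Icc 0 Γ.S,
    ‖B (Γ.toFun s)‖ ≤ C ∧ C⁻¹ ≤ ‖B (Γ.toFun s)‖
  argA : ∀ s ∈ Set.Icc 0 Γ.S,
    A (Γ.toFun s) = (‖A (Γ.toFun s)‖ : ℂ) * Complex.exp (Complex.I * aArg s)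
  argB : ∀ s ∈ Set.Icc 0 Γ.S,
    B (Γ.toFun s) = (‖B (Γ.toFun s)‖ : ℂ) * Complex.exp (Complex.I * bArg s)
  jumps : HasJumpData (fun s => bArg s - aArg s) Γ.S r sk h

/-- the canonical solution `Z(z)` of the homogeneous Riemann problem with coefficients
`A`, `B` and jump function `θ = β - α`. -/
def canonicalSolution (Γ : JordanCurve) (A B : ℂ → ℂ) (θ : ℝ → ℝ) (z : ℂ) : ℂ :=
  Complex.exp ((2 * Real.pi * Complex.I)⁻¹ *
      ∫ s in (0:ℝ)..Γ.S,
        (Real.log ‖B (Γ.toFun s) / A (Γ.toFun s)‖ : ℂ) *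
          deriv Γ.toFun s / (Γ.toFun s - z)) *
  Complex.exp (((2 * Real.pi : ℝ) : ℂ)⁻¹ *
      ∫ s in (0:ℝ)..Γ.S, (θ s : ℂ) * deriv Γ.toFun s / (Γ.toFun s - z))

namespace JordanCurve

/-- `(F⁺, F⁻)` with boundary values `(fbp, fbm)` is a solution of the homogeneous Riemann
problem `A F⁺ + B F⁻ = 0` a.e. on `Γ` in the class `E_{p,ρ}(D⁺) × ₘE_{p,ρ}(D⁻)`. -/
def SolvesHomRiemann (Γ : JordanCurve) (Dp : Set ℂ) (ρ : ℂ → ℝ) (p : ℝ) (m : ℤ)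
    (A B : ℂ → ℂ) (F G : ℂ → ℂ) (fbp fbm : ℝ → ℂ) : Prop :=
  Γ.MemSmirnovPlusW Dp ρ p F fbp ∧
  Γ.MemSmirnovMinusW (exteriorRegion Dp) ρ p m G fbm ∧
  ∀ᵐ s ∂(volume.restrict (Set.Icc 0 Γ.S)),
    A (Γ.toFun s) * fbp s + B (Γ.toFun s) * fbm s = 0

/-- `(F⁺, F⁻)` with boundary values `(fbp, fbm)` is a solution of the Riemann problem
`F⁺ - D F⁻ = g` a.e. on `Γ` in the class `E_{p,ρ}(D⁺) × ₘE_{p,ρ}(D⁻)`. -/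
def SolvesRiemann (Γ : JordanCurve) (Dp : Set ℂ) (ρ : ℂ → ℝ) (p : ℝ) (m : ℤ)
    (Dd : ℝ → ℂ) (g : ℝ → ℂ) (F G : ℂ → ℂ) (fbp fbm : ℝ → ℂ) : Prop :=
  Γ.MemSmirnovPlusW Dp ρ p F fbp ∧
  Γ.MemSmirnovMinusW (exteriorRegion Dp) ρ p m G fbm ∧
  ∀ᵐ s ∂(volume.restrict (Set.Icc 0 Γ.S)), fbp s - Dd s * fbm s = g s

end JordanCurve

/-- the particular solution `F₁(z) = (Z(z)/2πi) ∫_Γ g(ξ)/(Z⁺(ξ)(ξ-z)) dξ` of the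
non-homogeneous Riemann problem, where `Zbp` is the boundary values of the canonical
solution. -/
def particularSolution (Γ : JordanCurve) (A B : ℂ → ℂ) (θ : ℝ → ℝ) (Zbp : ℝ → ℂ)
    (g : ℝ → ℂ) (z : ℂ) : ℂ :=
  canonicalSolution Γ A B θ z * ((2 * Real.pi * Complex.I)⁻¹ *
    ∫ s in (0:ℝ)..Γ.S, g s * deriv Γ.toFun s / (Zbp s * (Γ.toFun s - z)))

/-- `ρ` is a power weight `ρ(z(s)) = Π_{k=1}^{mw} |s - t_k|^{α_k}` with distinct points
`t_k ∈ (0,S)`. -/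
def IsPowerWeight (Γ : JordanCurve) (ρ : ℂ → ℝ) (mw : ℕ) (tk ak : ℕ → ℝ) : Prop :=
  (∀ i, 1 ≤ i → i ≤ mw → tk i ∈ Set.Ioo 0 Γ.S) ∧
  (∀ i j, 1 ≤ i → i < j → j ≤ mw → tk i ≠ tk j) ∧
  ∀ s ∈ Set.Icc 0 Γ.S, ρ (Γ.toFun s) = ∏ k ∈ Finset.Icc 1 mw, |s - tk k| ^ ak k

/-- the combined exponent `β_k = -(p/2π) Σᵢ h_i χ_{T_k}(s_i) + Σᵢ α_i χ_{T_k}(t_i)`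
at the point `τ` -/
def betaExp (p : ℝ) (r : ℕ) (sk h : ℕ → ℝ) (mw : ℕ) (tk ak : ℕ → ℝ) (τ : ℝ) : ℝ :=
  -(p / (2 * Real.pi)) * (∑ i ∈ Finset.range (r + 1), if sk i = τ then h i else 0) +
    ∑ i ∈ Finset.Icc 1 mw, if tk i = τ then ak i else 0

/-- condition (4.5): `-1 < β_k < p/q` at every combined singular point -/
def BetaCond (p q : ℝ) (r : ℕ) (sk h : ℕ → ℝ) (mw : ℕ) (tk ak : ℕ → ℝ) : Prop :=
  ∀ τ : ℝ, ((∃ i ≤ r, sk i = τ) ∨ (∃ i, 1 ≤ i ∧ i ≤ mw ∧ tk i = τ)) →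
    -1 < betaExp p r sk h mw tk ak τ ∧ betaExp p r sk h mw tk ak τ < p / q

/-- a piecewise Lyapunov curve: finitely many arcs on each of which the tangent
direction angle is Hölder continuous -/
def IsPiecewiseLyapunov (Γ : JordanCurve) : Prop :=
  ∃ (k : ℕ) (σ : ℕ → ℝ), σ 0 = 0 ∧ σ k = Γ.S ∧
    (∀ i j, i < j → j ≤ k → σ i < σ j) ∧
    ∀ i < k, ∃ (θ : ℝ → ℝ) (μ L : ℝ), 0 < μ ∧ μ ≤ 1 ∧ 0 ≤ L ∧
      (∀ s ∈ Set.Ioo (σ i) (σ (i + 1)),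
        deriv Γ.toFun s = Complex.exp (Complex.I * θ s)) ∧
      ∀ s t, s ∈ Set.Ioo (σ i) (σ (i + 1)) → t ∈ Set.Ioo (σ i) (σ (i + 1)) →
        |θ s - θ t| ≤ L * |s - t| ^ μ

/-- a Radon curve (bounded rotation): the tangent direction angle has bounded variation -/
def IsRadon (Γ : JordanCurve) : Prop :=
  ∃ θ : ℝ → ℝ, BoundedVariationOn θ (Set.Icc 0 Γ.S) ∧
    ∀ᵐ s ∂(volume.restrict (Set.Icc 0 Γ.S)),
      deriv Γ.toFun s = Complex.exp (Complex.I * θ s)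

/-- the class `LR`: piecewise Lyapunov or Radon curves -/
def JordanCurve.IsLR (Γ : JordanCurve) : Prop := IsPiecewiseLyapunov Γ ∨ IsRadon Γ

/-- the operator `T_p⁺`: `(T_p⁺ f)(z) = (1/2πi) ∫_{∂ω} f(ξ) [φ₋₁'(ξ)]^{1/q} / (φ₋₁(ξ) - z) dξ`,
written in terms of the boundary values `fb` of `f`, the boundary values `φinvb` of `φ₋₁`
and the boundary branch `kq` of `[φ₋₁']^{1/q}`. -/
def TpPlus (φinvb kq : ℝ → ℂ) (fb : ℝ → ℂ) (z : ℂ) : ℂ :=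
  (2 * Real.pi * Complex.I)⁻¹ *
    ∫ t in (-Real.pi)..Real.pi,
      fb t * kq t / (φinvb t - z) * (Complex.I * Complex.exp (Complex.I * t))

/-- the operator `T_p⁻` on boundary values:
`[T_p⁻ f](z) = (1/2πi) ∫_{|w|=1} f⁻(w⁻¹) [ψ₋₁'(w)]^{1-1/p} w^{-2/p} (ψ₋₁(w)-z)⁻¹ dw`,
where `ψinvb` are the boundary values of `ψ₋₁` and `k1` is the boundary branch of
`[ψ₋₁']^{1-1/p}`. -/
def TpMinus (p : ℝ) (ψinvb k1 : ℝ → ℂ) (fb : ℝ → ℂ) (z : ℂ) : ℂ :=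
  (2 * Real.pi * Complex.I)⁻¹ *
    ∫ t in (-Real.pi)..Real.pi,
      fb (-t) * k1 t * Complex.exp (-(2 / p : ℝ) * Complex.I * t) / (ψinvb t - z) *
        (Complex.I * Complex.exp (Complex.I * t))

end

section Aux

lemma norm_deriv_le_lip {f : ℝ → ℂ} {K : NNReal} (hf : LipschitzWith K f) (x : ℝ) :
    ‖deriv f x‖ ≤ K := by
  by_cases hd : DifferentiableAt ℝ f x
  · have h1 : HasDerivAt f (deriv f x) x := hd.hasDerivAt
    have h2 : Tendsto (slope f x) (𝓝[≠] x) (𝓝 (deriv f x)) :=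
      hasDerivAt_iff_tendsto_slope.mp h1
    have hb : ∀ y ∈ ({x}ᶜ : Set ℝ), ‖slope f x y‖ ≤ K := by
      intro y hy
      have hyx : y ≠ x := hy
      have hxy : (0:ℝ) < |y - x| := by
        simpa [sub_eq_zero] using hyx
      rw [slope_def_module, norm_smul, norm_inv, Real.norm_eq_abs]
      have := hf.dist_le_mul y x
      rw [dist_eq_norm, dist_eq_norm, Real.norm_eq_abs] at this
      calc |y - x|⁻¹ * ‖f y - f x‖ ≤ |y - x|⁻¹ * (K * |y - x|) := by gcongr
        _ = K := by field_simp
    have hcl : IsClosed {z : ℂ | ‖z‖ ≤ (K:ℝ)} := isClosed_le (by fun_prop) continuous_const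
    exact hcl.mem_of_tendsto h2 (by
      filter_upwards [self_mem_nhdsWithin] with y hy using hb y hy)
  · rw [deriv_zero_of_not_differentiableAt hd]
    simp

/-- FTC for Lipschitz functions `ℝ → ℂ`. -/
lemma lipschitz_ftc {f : ℝ → ℂ} {K : NNReal} (hf : LipschitzWith K f) {a b : ℝ}
    (hab : a ≤ b) : ∫ t in Ioc a b, deriv f t = f b - f a := by
  have hcont : Continuous f := hf.continuous
  set g : ℕ → ℝ → ℂ := fun n x => (((n:ℝ)+1)) • (f (x + 1/((n:ℝ)+1)) - f x) with hg
  have hn1 : ∀ n : ℕ, (0:ℝ) < (n:ℝ)+1 := fun n => by positivity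
  have hgcont : ∀ n, Continuous (g n) := by
    intro n
    exact ((hcont.comp (continuous_id.add continuous_const)).sub hcont).const_smul (((n:ℝ)+1))
  -- limit 1 : ∫ gₙ → ∫ deriv f  (dominated convergence)
  have hmeasg : ∀ n, AEStronglyMeasurable (g n) (volume.restrict (Ioc a b)) :=
    fun n => (hgcont n).aestronglyMeasurable
  have hbound : ∀ n, ∀ᵐ x ∂(volume.restrict (Ioc a b)), ‖g n x‖ ≤ (K:ℝ) := by
    intro n
    refine ae_of_all _ fun x => ?_
    rw [hg]
    simp only [norm_smul, Real.norm_eq_abs]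
    have h1 : ‖f (x + 1/((n:ℝ)+1)) - f x‖ ≤ (K:ℝ) * (1/((n:ℝ)+1)) := by
      have := hf.dist_le_mul (x + 1/((n:ℝ)+1)) x
      rw [dist_eq_norm, Real.dist_eq] at this
      simpa [abs_of_pos (by positivity : (0:ℝ) < ((n:ℝ)+1)⁻¹)] using this
    calc |(n:ℝ)+1| * ‖f (x + 1/((n:ℝ)+1)) - f x‖
        ≤ |(n:ℝ)+1| * ((K:ℝ) * (1/((n:ℝ)+1))) := by gcongr
      _ = (K:ℝ) := by
          rw [abs_of_pos (hn1 n)]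
          field_simp
  have hlim : ∀ᵐ x ∂(volume.restrict (Ioc a b)),
      Tendsto (fun n => g n x) atTop (𝓝 (deriv f x)) := by
    have hae : ∀ᵐ x : ℝ, DifferentiableAt ℝ f x := hf.ae_differentiableAt_real
    refine ae_restrict_of_ae ?_
    filter_upwards [hae] with x hx
    have h1 : Tendsto (slope f x) (𝓝[≠] x) (𝓝 (deriv f x)) :=
      hasDerivAt_iff_tendsto_slope.mp hx.hasDerivAt
    have h2 : Tendsto (fun n : ℕ => x + 1/((n:ℝ)+1)) atTop (𝓝[≠] x) := by
      rw [tendsto_nhdsWithin_iff]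
      constructor
      · have : Tendsto (fun n : ℕ => 1/((n:ℝ)+1)) atTop (𝓝 0) :=
          tendsto_one_div_add_atTop_nhds_zero_nat
        simpa using (tendsto_const_nhds.add this)
      · exact Eventually.of_forall fun n => by
          simp only [mem_compl_iff, mem_singleton_iff]
          intro hcon
          have h2 : (1:ℝ)/((n:ℝ)+1) = 0 := by linarith
          exact (by positivity : (0:ℝ) < 1/((n:ℝ)+1)).ne' h2
    have h3 := h1.comp h2
    refine h3.congr fun n => ?_
    simp only [Function.comp_apply]
    rw [slope_def_module]
    simp only [add_sub_cancel_left]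
    rw [hg]
    congr 1
    rw [one_div, inv_inv]
  have lim1 : Tendsto (fun n => ∫ x in Ioc a b, g n x) atTop
      (𝓝 (∫ x in Ioc a b, deriv f x)) := by
    exact tendsto_integral_of_dominated_convergence (fun _ => (K:ℝ)) hmeasg
      (integrable_const _) hbound hlim
  -- limit 2 : ∫ gₙ = (n+1) • (∫_b^{b+h} f - ∫_a^{a+h} f) → f b - f a
  have hInt : ∀ u v : ℝ, IntervalIntegrable f volume u v :=
    fun u v => hcont.intervalIntegrable u v
  have key : ∀ n, ∫ x in Ioc a b, g n x
      = (((n:ℝ)+1)) • ((∫ x in b..(b + 1/((n:ℝ)+1)), f x) - ∫ x in a..(a + 1/((n:ℝ)+1)), f x) := by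
    intro n
    set h : ℝ := 1/((n:ℝ)+1) with hh
    have h0 : ∫ x in Ioc a b, g n x = ∫ x in a..b, g n x := by
      rw [intervalIntegral.integral_of_le hab]
    rw [h0, hg]
    have h1 : ∫ x in a..b, (((n:ℝ)+1)) • (f (x + h) - f x)
        = (((n:ℝ)+1)) • ∫ x in a..b, (f (x + h) - f x) := by
      rw [intervalIntegral.integral_smul]
    rw [h1]
    congr 1
    have h2 : ∫ x in a..b, (f (x + h) - f x) = (∫ x in a..b, f (x + h)) - ∫ x in a..b, f x := by
      apply intervalIntegral.integral_sub
      · exact ((hcont.comp (continuous_id.add continuous_const)).intervalIntegrable a b)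
      · exact hInt a b
    rw [h2, intervalIntegral.integral_comp_add_right]
    have c1 : (∫ x in a..(a+h), f x) + (∫ x in (a+h)..(b+h), f x) = ∫ x in a..(b+h), f x :=
      intervalIntegral.integral_add_adjacent_intervals (hInt _ _) (hInt _ _)
    have c2 : (∫ x in a..b, f x) + (∫ x in b..(b+h), f x) = ∫ x in a..(b+h), f x :=
      intervalIntegral.integral_add_adjacent_intervals (hInt _ _) (hInt _ _)
    have := c1.trans c2.symm
    linear_combination this
  have lim2 : Tendsto (fun n => ∫ x in Ioc a b, g n x) atTop (𝓝 (f b - f a)) := by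
    have claim : ∀ c : ℝ, Tendsto
        (fun n : ℕ => (((n:ℝ)+1)) • ∫ x in c..(c + 1/((n:ℝ)+1)), f x) atTop (𝓝 (f c)) := by
      intro c
      rw [tendsto_iff_norm_sub_tendsto_zero]
      have hb : ∀ n : ℕ, ‖(((n:ℝ)+1)) • (∫ x in c..(c + 1/((n:ℝ)+1)), f x) - f c‖
          ≤ (K:ℝ) * (1/((n:ℝ)+1)) := by
        intro n
        set h : ℝ := 1/((n:ℝ)+1) with hh
        have hpos : 0 < h := by positivity
        have e1 : (((n:ℝ)+1)) • (∫ x in c..(c+h), f x) - f c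
            = (((n:ℝ)+1)) • ((∫ x in c..(c+h), f x) - h • f c) := by
          rw [smul_sub, smul_smul]
          have : ((n:ℝ)+1) * h = 1 := by
            rw [hh]; field_simp
          rw [this, one_smul]
        have e2 : (∫ x in c..(c+h), f x) - h • f c = ∫ x in c..(c+h), (f x - f c) := by
          rw [intervalIntegral.integral_sub (hInt _ _)
            (intervalIntegrable_const)]
          congr 1
          rw [intervalIntegral.integral_const]
          simp
        rw [e1, e2, norm_smul, Real.norm_eq_abs, abs_of_pos (hn1 n)]
        have e3 : ‖∫ x in c..(c+h), (f x - f c)‖ ≤ (K:ℝ) * h * |c + h - c| := by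
          apply intervalIntegral.norm_integral_le_of_norm_le_const
          intro x hx
          rw [uIoc_of_le (by linarith)] at hx
          have := hf.dist_le_mul x c
          rw [dist_eq_norm, Real.dist_eq] at this
          refine this.trans ?_
          have : |x - c| ≤ h := by
            rw [abs_of_pos (by linarith [hx.1] : 0 < x - c)]
            linarith [hx.2]
          gcongr
        have e4 : |c + h - c| = h := by rw [add_sub_cancel_left, abs_of_pos hpos]
        rw [e4] at e3
        calc ((n:ℝ)+1) * ‖∫ x in c..(c+h), (f x - f c)‖
            ≤ ((n:ℝ)+1) * ((K:ℝ) * h * h) := by gcongr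
          _ = (K:ℝ) * h := by
              rw [hh]; field_simp
      have : Tendsto (fun n : ℕ => (K:ℝ) * (1/((n:ℝ)+1))) atTop (𝓝 0) := by
        simpa using tendsto_one_div_add_atTop_nhds_zero_nat.const_mul (K:ℝ)
      exact squeeze_zero (fun n : ℕ => norm_nonneg _) hb this
    refine ((claim b).sub (claim a)).congr fun n => ?_
    rw [key n, smul_sub]
  exact tendsto_nhds_unique lim1 lim2

/-- If the derivative of a 1-Lipschitz curve is a.e. aligned with a unit direction `u`
on `(a,b)`, then chords grow at speed at least `1/2`. -/
lemma align_chord {z : ℝ → ℂ} (hz : LipschitzWith 1 z) {a b : ℝ} {u : ℂ} (hu : ‖u‖ = 1)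
    (hal : ∀ᵐ t ∂(volume.restrict (Ioo a b)), 1/2 ≤ ((starRingEnd ℂ) u * deriv z t).re) :
    ∀ s ∈ Icc a b, ∀ s' ∈ Icc a b, s ≤ s' → (s' - s)/2 ≤ ‖z s' - z s‖ := by
  intro s hs s' hs' hss
  have hal' : ∀ᵐ t ∂(volume.restrict (Ioc s s')), 1/2 ≤ ((starRingEnd ℂ) u * deriv z t).re := by
    have h1 : volume.restrict (Ioo a b) = volume.restrict (Ioc a b) :=
      Measure.restrict_congr_set Ioo_ae_eq_Ioc
    rw [h1] at hal
    exact ae_restrict_of_ae_restrict_of_subset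
      (Ioc_subset_Ioc hs.1 hs'.2) hal
  have hftc : ∫ t in Ioc s s', deriv z t = z s' - z s := lipschitz_ftc hz hss
  have hder_meas : AEStronglyMeasurable (deriv z) (volume.restrict (Ioc s s')) :=
    (measurable_deriv z).aestronglyMeasurable
  have hder_int : Integrable (fun t => (starRingEnd ℂ) u * deriv z t)
      (volume.restrict (Ioc s s')) := by
    refine Integrable.mono' (integrable_const (1:ℝ)) (hder_meas.const_mul _) ?_
    refine ae_of_all _ fun t => ?_
    rw [norm_mul]
    have h1 : ‖(starRingEnd ℂ) u‖ = 1 := by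
      rw [RCLike.norm_conj, hu]
    rw [h1, one_mul]
    simpa using norm_deriv_le_lip hz t
  have key : (s' - s)/2 ≤ ((starRingEnd ℂ) u * (z s' - z s)).re := by
    have h2 : (starRingEnd ℂ) u * (z s' - z s) = ∫ t in Ioc s s', (starRingEnd ℂ) u * deriv z t := by
      rw [← hftc, ← integral_const_mul]
    rw [h2]
    have h3 : (∫ t in Ioc s s', (starRingEnd ℂ) u * deriv z t).re
        = ∫ t in Ioc s s', ((starRingEnd ℂ) u * deriv z t).re := by
      rw [← RCLike.re_eq_complex_re, ← integral_re hder_int]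
    rw [h3]
    have h4 : ∫ t in Ioc s s', (1/2 : ℝ) ≤ ∫ t in Ioc s s', ((starRingEnd ℂ) u * deriv z t).re := by
      refine integral_mono_ae (integrable_const _) hder_int.re hal'
    have h5 : ∫ t in Ioc s s', (1/2 : ℝ) = (s' - s)/2 := by
      rw [setIntegral_const, Real.volume_real_Ioc_of_le hss, smul_eq_mul]
      ring
    linarith
  have h6 : ((starRingEnd ℂ) u * (z s' - z s)).re ≤ ‖z s' - z s‖ := by
    calc ((starRingEnd ℂ) u * (z s' - z s)).re ≤ ‖(starRingEnd ℂ) u * (z s' - z s)‖ :=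
          Complex.re_le_norm _
      _ = ‖(starRingEnd ℂ) u * (z s' - z s)‖ := rfl
      _ = ‖(starRingEnd ℂ) u‖ * ‖z s' - z s‖ := norm_mul _ _
      _ = ‖z s' - z s‖ := by rw [RCLike.norm_conj, hu, one_mul]
  linarith

lemma re_conj_exp {α β : ℝ} (h : |β - α| ≤ 1/2) :
    1/2 ≤ ((starRingEnd ℂ) (Complex.exp (Complex.I * α)) * Complex.exp (Complex.I * β)).re := by
  have h1 : (starRingEnd ℂ) (Complex.exp (Complex.I * α)) = Complex.exp (-(Complex.I * α)) := by
    rw [← Complex.exp_conj]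
    congr 1
    simp [Complex.conj_I]
  rw [h1, ← Complex.exp_add]
  have h2 : -(Complex.I * α) + Complex.I * β = ((β - α : ℝ) : ℂ) * Complex.I := by
    push_cast; ring
  rw [h2, Complex.exp_ofReal_mul_I_re]
  have h3 := Real.one_sub_sq_div_two_le_cos (x := β - α)
  nlinarith [_root_.sq_abs (β - α), abs_nonneg (β - α)]

lemma discrete_right {f : ℕ → ℝ} {τ : ℝ} : ∀ {k : ℕ}, f 0 ≤ τ → τ < f k →
    ∃ i < k, f i ≤ τ ∧ τ < f (i + 1) := by
  intro k
  induction k with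
  | zero => intro h1 h2; exact absurd (h1.trans_lt h2) (lt_irrefl _)
  | succ n ih =>
    intro h1 h2
    by_cases hc : τ < f n
    · obtain ⟨i, hi, h⟩ := ih h1 hc
      exact ⟨i, Nat.lt_succ_of_lt hi, h⟩
    · exact ⟨n, Nat.lt_succ_self n, le_of_not_gt hc, h2⟩

lemma discrete_left {f : ℕ → ℝ} {τ : ℝ} : ∀ {k : ℕ}, f 0 < τ → τ ≤ f k →
    ∃ i < k, f i < τ ∧ τ ≤ f (i + 1) := by
  intro k
  induction k with
  | zero => intro h1 h2; exact absurd (h2.trans_lt h1) (lt_irrefl _)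
  | succ n ih =>
    intro h1 h2
    by_cases hc : τ ≤ f n
    · obtain ⟨i, hi, h⟩ := ih h1 hc
      exact ⟨i, Nat.lt_succ_of_lt hi, h⟩
    · exact ⟨n, Nat.lt_succ_self n, lt_of_not_ge hc, h2⟩

lemma mono_right_approx {g : ℝ → ℝ} {S τ : ℝ} (hg : MonotoneOn g (Set.Icc 0 S))
    (hτ : τ ∈ Set.Ico 0 S) :
    ∃ δ > 0, τ + δ ≤ S ∧ ∃ α : ℝ, ∀ t ∈ Set.Ioc τ (τ + δ), |g t - α| ≤ 1/8 := by
  set A := g '' Set.Ioc τ S with hA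
  have hne : A.Nonempty := ⟨g S, S, ⟨hτ.2, le_refl S⟩, rfl⟩
  have hτm : τ ∈ Set.Icc 0 S := ⟨hτ.1, hτ.2.le⟩
  have hmem : ∀ t ∈ Set.Ioc τ S, t ∈ Set.Icc 0 S := fun t ht => ⟨hτ.1.trans ht.1.le, ht.2⟩
  have hbdd : BddBelow A := by
    refine ⟨g τ, ?_⟩
    rintro y ⟨t, ht, rfl⟩
    exact hg hτm (hmem t ht) ht.1.le
  set α := sInf A with hα
  obtain ⟨a, ⟨t₁, ht₁, rfl⟩, ha⟩ := exists_lt_of_csInf_lt hne (by linarith : sInf A < α + 1/8)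
  refine ⟨t₁ - τ, by linarith [ht₁.1], by linarith [ht₁.2], α, ?_⟩
  intro t ht
  have htt1 : t ≤ t₁ := by linarith [ht.2]
  have htm : t ∈ Set.Icc 0 S := ⟨hτ.1.trans ht.1.le, htt1.trans ht₁.2⟩
  have h1 : α ≤ g t := csInf_le hbdd ⟨t, ⟨ht.1, htm.2⟩, rfl⟩
  have h2 : g t ≤ g t₁ := hg htm (hmem t₁ ht₁) htt1
  rw [abs_le]
  constructor <;> linarith

lemma mono_left_approx {g : ℝ → ℝ} {S τ : ℝ} (hg : MonotoneOn g (Set.Icc 0 S))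
    (hτ : τ ∈ Set.Ioc 0 S) :
    ∃ δ > 0, 0 ≤ τ - δ ∧ ∃ α : ℝ, ∀ t ∈ Set.Ico (τ - δ) τ, |g t - α| ≤ 1/8 := by
  set A := g '' Set.Ico 0 τ with hA
  have hne : A.Nonempty := ⟨g 0, 0, ⟨le_refl 0, hτ.1⟩, rfl⟩
  have hτm : τ ∈ Set.Icc 0 S := ⟨hτ.1.le, hτ.2⟩
  have hmem : ∀ t ∈ Set.Ico 0 τ, t ∈ Set.Icc 0 S := fun t ht => ⟨ht.1, ht.2.le.trans hτ.2⟩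
  have hbdd : BddAbove A := by
    refine ⟨g τ, ?_⟩
    rintro y ⟨t, ht, rfl⟩
    exact hg (hmem t ht) hτm ht.2.le
  set α := sSup A with hα
  obtain ⟨a, ⟨t₁, ht₁, rfl⟩, ha⟩ := exists_lt_of_lt_csSup hne (by linarith : α - 1/8 < sSup A)
  refine ⟨τ - t₁, by linarith [ht₁.2], by linarith [ht₁.1], α, ?_⟩
  intro t ht
  have htt1 : t₁ ≤ t := by linarith [ht.1]
  have htm : t ∈ Set.Icc 0 S := ⟨ht₁.1.trans htt1, ht.2.le.trans hτ.2⟩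
  have h1 : g t ≤ α := le_csSup hbdd ⟨t, ⟨ht₁.1.trans htt1, ht.2⟩, rfl⟩
  have h2 : g t₁ ≤ g t := hg (hmem t₁ ht₁) htm htt1
  rw [abs_le]
  constructor <;> linarith

end Aux

lemma alignR (Γ : JordanCurve) (hΓ : Γ.IsLR) {τ : ℝ} (hτ : τ ∈ Set.Ico 0 Γ.S) :
    ∃ δ > 0, ∀ s ∈ Set.Ioc τ (τ + δ), (s - τ)/2 ≤ ‖Γ.toFun τ - Γ.toFun s‖ := by
  suffices h : ∃ δ > 0, ∃ u : ℂ, ‖u‖ = 1 ∧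
      ∀ᵐ t ∂(volume.restrict (Set.Ioo τ (τ + δ))),
        1/2 ≤ ((starRingEnd ℂ) u * deriv Γ.toFun t).re by
    obtain ⟨δ, hδ, u, hu, hal⟩ := h
    refine ⟨δ, hδ, fun s hs => ?_⟩
    have := align_chord Γ.lipschitz hu hal τ ⟨le_refl τ, by linarith⟩ s ⟨hs.1.le, hs.2⟩ hs.1.le
    rw [norm_sub_rev]
    exact this
  cases hΓ with
  | inl hL =>
    obtain ⟨k, σb, hσ0, hσk, hmono, harc⟩ := hL
    have h0τ : σb 0 ≤ τ := by rw [hσ0]; exact hτ.1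
    have hτk : τ < σb k := by rw [hσk]; exact hτ.2
    obtain ⟨i, hik, hiτ, hτi1⟩ := discrete_right h0τ hτk
    obtain ⟨θi, μ, L, hμ0, hμ1, hL0, hder, hHold⟩ := harc i hik
    set δ0 : ℝ := (1/(2*(L+1))) ^ (1/μ : ℝ) with hδ0def
    have hδ0 : 0 < δ0 := Real.rpow_pos_of_pos (by positivity) _
    set δ := min ((σb (i+1) - τ)/2) δ0 with hδdef
    have hδ : 0 < δ := lt_min (by linarith) hδ0
    have hδle : δ ≤ (σb (i+1) - τ)/2 := min_le_left _ _
    have hδle2 : δ ≤ δ0 := min_le_right _ _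
    have hsub : Set.Ioo τ (τ + δ) ⊆ Set.Ioo (σb i) (σb (i+1)) := by
      intro t ht
      exact ⟨lt_of_le_of_lt hiτ ht.1, by linarith [ht.2]⟩
    set t₀ := τ + δ/2 with ht₀def
    have ht₀ : t₀ ∈ Set.Ioo τ (τ + δ) := ⟨by simp [ht₀def]; linarith, by simp [ht₀def]; linarith⟩
    refine ⟨δ, hδ, Complex.exp (Complex.I * θi t₀), ?_, ?_⟩
    · simp [Complex.norm_exp]
    · rw [ae_restrict_iff' measurableSet_Ioo]
      refine Filter.Eventually.of_forall fun t ht => ?_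
      rw [hder t (hsub ht)]
      apply re_conj_exp
      have hd : |t - t₀| ≤ δ0 := by
        have h1 : |t - t₀| ≤ δ := by
          rw [abs_le]
          constructor <;> [linarith [ht.1, ht₀.2]; linarith [ht.2, ht₀.1]]
        linarith
      have hh := hHold t t₀ (hsub ht) (hsub ht₀)
      have h2 : |t - t₀| ^ (μ:ℝ) ≤ δ0 ^ (μ:ℝ) :=
        Real.rpow_le_rpow (abs_nonneg _) hd hμ0.le
      have h3 : δ0 ^ (μ:ℝ) = 1/(2*(L+1)) := by
        rw [hδ0def, ← Real.rpow_mul (by positivity), one_div_mul_cancel hμ0.ne',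
          Real.rpow_one]
      have h4 : L * (1/(2*(L+1))) ≤ 1/2 := by
        rw [mul_one_div, div_le_div_iff₀ (by positivity) (by norm_num)]
        nlinarith
      calc |θi t - θi t₀| ≤ L * |t - t₀| ^ (μ:ℝ) := hh
        _ ≤ L * (1/(2*(L+1))) := by rw [← h3]; exact mul_le_mul_of_nonneg_left h2 hL0
        _ ≤ 1/2 := h4
  | inr hR =>
    obtain ⟨θ0, hbv, hae⟩ := hR
    obtain ⟨P, Q, hP, hQ, hPQ⟩ :=
      hbv.locallyBoundedVariationOn.exists_monotoneOn_sub_monotoneOn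
    obtain ⟨δP, hδP, hPS, αP, hPa⟩ := mono_right_approx hP hτ
    obtain ⟨δQ, hδQ, hQS, αQ, hQa⟩ := mono_right_approx hQ hτ
    set δ := min δP δQ with hδdef
    have hδ : 0 < δ := lt_min hδP hδQ
    have hsub : Set.Ioo τ (τ + δ) ⊆ Set.Icc 0 Γ.S := fun t ht =>
      ⟨hτ.1.trans ht.1.le, ht.2.le.trans (by linarith [min_le_left δP δQ])⟩
    refine ⟨δ, hδ, Complex.exp (Complex.I * (αP - αQ : ℝ)), ?_, ?_⟩
    · simp [Complex.norm_exp]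
    · have hae2 : ∀ᵐ t ∂(volume.restrict (Set.Ioo τ (τ + δ))),
          deriv Γ.toFun t = Complex.exp (Complex.I * θ0 t) :=
        ae_restrict_of_ae_restrict_of_subset hsub hae
      filter_upwards [hae2, ae_restrict_mem measurableSet_Ioo] with t hd ht
      rw [hd]
      apply re_conj_exp
      have h1 := abs_le.1 (hPa t ⟨ht.1, ht.2.le.trans (by linarith [min_le_left δP δQ])⟩)
      have h2 := abs_le.1 (hQa t ⟨ht.1, ht.2.le.trans (by linarith [min_le_right δP δQ])⟩)
      have e : θ0 t - (αP - αQ) = (P t - αP) - (Q t - αQ) := by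
        rw [hPQ]; simp only [Pi.sub_apply]; ring
      rw [e, abs_le]
      constructor <;> linarith [h1.1, h1.2, h2.1, h2.2]

lemma alignL (Γ : JordanCurve) (hΓ : Γ.IsLR) {τ : ℝ} (hτ : τ ∈ Set.Ioc 0 Γ.S) :
    ∃ δ > 0, ∀ s ∈ Set.Ico (τ - δ) τ, (τ - s)/2 ≤ ‖Γ.toFun τ - Γ.toFun s‖ := by
  suffices h : ∃ δ > 0, ∃ u : ℂ, ‖u‖ = 1 ∧
      ∀ᵐ t ∂(volume.restrict (Set.Ioo (τ - δ) τ)),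
        1/2 ≤ ((starRingEnd ℂ) u * deriv Γ.toFun t).re by
    obtain ⟨δ, hδ, u, hu, hal⟩ := h
    refine ⟨δ, hδ, fun s hs => ?_⟩
    exact align_chord Γ.lipschitz hu hal s ⟨hs.1, hs.2.le⟩ τ ⟨by linarith, le_refl τ⟩ hs.2.le
  cases hΓ with
  | inl hL =>
    obtain ⟨k, σb, hσ0, hσk, hmono, harc⟩ := hL
    have h0τ : σb 0 < τ := by rw [hσ0]; exact hτ.1
    have hτk : τ ≤ σb k := by rw [hσk]; exact hτ.2
    obtain ⟨i, hik, hiτ, hτi1⟩ := discrete_left h0τ hτk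
    obtain ⟨θi, μ, L, hμ0, hμ1, hL0, hder, hHold⟩ := harc i hik
    set δ0 : ℝ := (1/(2*(L+1))) ^ (1/μ : ℝ) with hδ0def
    have hδ0 : 0 < δ0 := Real.rpow_pos_of_pos (by positivity) _
    set δ := min ((τ - σb i)/2) δ0 with hδdef
    have hδ : 0 < δ := lt_min (by linarith) hδ0
    have hδle : δ ≤ (τ - σb i)/2 := min_le_left _ _
    have hδle2 : δ ≤ δ0 := min_le_right _ _
    have hsub : Set.Ioo (τ - δ) τ ⊆ Set.Ioo (σb i) (σb (i+1)) := by
      intro t ht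
      exact ⟨by linarith [ht.1], lt_of_lt_of_le ht.2 hτi1⟩
    set t₀ := τ - δ/2 with ht₀def
    have ht₀ : t₀ ∈ Set.Ioo (τ - δ) τ := ⟨by simp [ht₀def]; linarith, by simp [ht₀def]; linarith⟩
    refine ⟨δ, hδ, Complex.exp (Complex.I * θi t₀), ?_, ?_⟩
    · simp [Complex.norm_exp]
    · rw [ae_restrict_iff' measurableSet_Ioo]
      refine Filter.Eventually.of_forall fun t ht => ?_
      rw [hder t (hsub ht)]
      apply re_conj_exp
      have hd : |t - t₀| ≤ δ0 := by
        have h1 : |t - t₀| ≤ δ := by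
          rw [abs_le]
          constructor <;> [linarith [ht.1, ht₀.2]; linarith [ht.2, ht₀.1]]
        linarith
      have hh := hHold t t₀ (hsub ht) (hsub ht₀)
      have h2 : |t - t₀| ^ (μ:ℝ) ≤ δ0 ^ (μ:ℝ) :=
        Real.rpow_le_rpow (abs_nonneg _) hd hμ0.le
      have h3 : δ0 ^ (μ:ℝ) = 1/(2*(L+1)) := by
        rw [hδ0def, ← Real.rpow_mul (by positivity), one_div_mul_cancel hμ0.ne',
          Real.rpow_one]
      have h4 : L * (1/(2*(L+1))) ≤ 1/2 := by
        rw [mul_one_div, div_le_div_iff₀ (by positivity) (by norm_num)]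
        nlinarith
      calc |θi t - θi t₀| ≤ L * |t - t₀| ^ (μ:ℝ) := hh
        _ ≤ L * (1/(2*(L+1))) := by rw [← h3]; exact mul_le_mul_of_nonneg_left h2 hL0
        _ ≤ 1/2 := h4
  | inr hR =>
    obtain ⟨θ0, hbv, hae⟩ := hR
    obtain ⟨P, Q, hP, hQ, hPQ⟩ :=
      hbv.locallyBoundedVariationOn.exists_monotoneOn_sub_monotoneOn
    obtain ⟨δP, hδP, hPS, αP, hPa⟩ := mono_left_approx hP hτ
    obtain ⟨δQ, hδQ, hQS, αQ, hQa⟩ := mono_left_approx hQ hτ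
    set δ := min δP δQ with hδdef
    have hδ : 0 < δ := lt_min hδP hδQ
    have hsub : Set.Ioo (τ - δ) τ ⊆ Set.Icc 0 Γ.S := fun t ht =>
      ⟨by linarith [ht.1, min_le_left δP δQ], ht.2.le.trans hτ.2⟩
    refine ⟨δ, hδ, Complex.exp (Complex.I * (αP - αQ : ℝ)), ?_, ?_⟩
    · simp [Complex.norm_exp]
    · have hae2 : ∀ᵐ t ∂(volume.restrict (Set.Ioo (τ - δ) τ)),
          deriv Γ.toFun t = Complex.exp (Complex.I * θ0 t) :=
        ae_restrict_of_ae_restrict_of_subset hsub hae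
      filter_upwards [hae2, ae_restrict_mem measurableSet_Ioo] with t hd ht
      rw [hd]
      apply re_conj_exp
      have h1 := abs_le.1 (hPa t ⟨by linarith [ht.1, min_le_left δP δQ], ht.2⟩)
      have h2 := abs_le.1 (hQa t ⟨by linarith [ht.1, min_le_right δP δQ], ht.2⟩)
      have e : θ0 t - (αP - αQ) = (P t - αP) - (Q t - αQ) := by
        rw [hPQ]; simp only [Pi.sub_apply]; ring
      rw [e, abs_le]
      constructor <;> linarith [h1.1, h1.2, h2.1, h2.2]

lemma chord (Γ : JordanCurve) (hΓ : Γ.IsLR) {τ : ℝ} (hτ : τ ∈ Set.Icc 0 Γ.S) :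
    ∃ δ > 0, ∀ s ∈ Set.Icc 0 Γ.S, |s - τ| ≤ δ →
      |s - τ|/2 ≤ ‖Γ.toFun τ - Γ.toFun s‖ := by
  obtain ⟨δR, hδR, hRp⟩ : ∃ δ > 0, ∀ s ∈ Set.Icc 0 Γ.S, τ < s → s ≤ τ + δ →
      (s - τ)/2 ≤ ‖Γ.toFun τ - Γ.toFun s‖ := by
    by_cases hR : τ < Γ.S
    · obtain ⟨δ, hδ, hp⟩ := alignR Γ hΓ ⟨hτ.1, hR⟩
      exact ⟨δ, hδ, fun s hsm h1 h2 => hp s ⟨h1, h2⟩⟩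
    · refine ⟨1, one_pos, fun s hsm h1 _ => absurd (h1.trans_le hsm.2) hR⟩
  obtain ⟨δL, hδL, hLp⟩ : ∃ δ > 0, ∀ s ∈ Set.Icc 0 Γ.S, s < τ → τ - δ ≤ s →
      (τ - s)/2 ≤ ‖Γ.toFun τ - Γ.toFun s‖ := by
    by_cases hL : 0 < τ
    · obtain ⟨δ, hδ, hp⟩ := alignL Γ hΓ ⟨hL, hτ.2⟩
      exact ⟨δ, hδ, fun s hsm h1 h2 => hp s ⟨h2, h1⟩⟩
    · refine ⟨1, one_pos, fun s hsm h1 _ => absurd (hsm.1.trans_lt h1) hL⟩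
  refine ⟨min δR δL, lt_min hδR hδL, fun s hsm hd => ?_⟩
  rcases lt_trichotomy s τ with h | h | h
  · have h1 : |s - τ| = τ - s := by rw [abs_sub_comm, abs_of_pos (by linarith)]
    rw [h1]
    refine hLp s hsm h ?_
    rw [h1] at hd
    linarith [min_le_right δR δL]
  · subst h; simp
  · have h1 : |s - τ| = s - τ := abs_of_pos (by linarith)
    rw [h1]
    refine hRp s hsm h ?_
    rw [h1] at hd
    linarith [min_le_left δR δL]

lemma z_periodS (Γ : JordanCurve) : Γ.toFun Γ.S = Γ.toFun 0 := by
  have := Γ.periodic 0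
  simpa using this

lemma z_inj (Γ : JordanCurve) {a b : ℝ} (ha : a ∈ Set.Icc 0 Γ.S) (hb : b ∈ Set.Icc 0 Γ.S)
    (hab : Γ.toFun a = Γ.toFun b) : a = b ∨ a - b = Γ.S ∨ b - a = Γ.S := by
  have hS := Γ.S_pos
  set a' := if a = Γ.S then 0 else a with ha'
  set b' := if b = Γ.S then 0 else b with hb'
  have ha'm : a' ∈ Set.Ico 0 Γ.S := by
    rw [ha']; split
    · exact ⟨le_refl 0, hS⟩
    · exact ⟨ha.1, lt_of_le_of_ne ha.2 (by assumption)⟩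
  have hb'm : b' ∈ Set.Ico 0 Γ.S := by
    rw [hb']; split
    · exact ⟨le_refl 0, hS⟩
    · exact ⟨hb.1, lt_of_le_of_ne hb.2 (by assumption)⟩
  have hza : Γ.toFun a' = Γ.toFun a := by
    rw [ha']; split
    · rename_i h; rw [h, z_periodS]
    · rfl
  have hzb : Γ.toFun b' = Γ.toFun b := by
    rw [hb']; split
    · rename_i h; rw [h, z_periodS]
    · rfl
  have : a' = b' := Γ.injOn ha'm hb'm (by rw [hza, hzb, hab])
  rw [ha', hb'] at this
  by_cases h1 : a = Γ.S
  · by_cases h2 : b = Γ.S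
    · left; rw [h1, h2]
    · rw [if_pos h1, if_neg h2] at this
      right; left; rw [h1, ← this]; ring
  · by_cases h2 : b = Γ.S
    · rw [if_neg h1, if_pos h2] at this
      right; right; rw [h2, this]; ring
    · rw [if_neg h1, if_neg h2] at this
      left; exact this

lemma z_far (Γ : JordanCurve) {τ : ℝ} (hτ : τ ∈ Set.Icc 0 Γ.S) {ε : ℝ} (hε : 0 < ε) :
    ∃ m > 0, ∀ s ∈ Set.Icc 0 Γ.S, ε ≤ |s - τ| → ε ≤ |s - τ + Γ.S| → ε ≤ |s - τ - Γ.S| →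
      m ≤ ‖Γ.toFun τ - Γ.toFun s‖ := by
  set K := {s : ℝ | s ∈ Set.Icc 0 Γ.S ∧ ε ≤ |s - τ| ∧ ε ≤ |s - τ + Γ.S| ∧ ε ≤ |s - τ - Γ.S|}
    with hK
  have hKc : IsCompact K := by
    apply IsCompact.of_isClosed_subset isCompact_Icc _ (fun s hs => hs.1)
    have c1 : Continuous fun s : ℝ => |s - τ| := (continuous_id.sub continuous_const).abs
    have c2 : Continuous fun s : ℝ => |s - τ + Γ.S| :=
      ((continuous_id.sub continuous_const).add continuous_const).abs
    have c3 : Continuous fun s : ℝ => |s - τ - Γ.S| :=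
      ((continuous_id.sub continuous_const).sub continuous_const).abs
    exact isClosed_Icc.inter ((isClosed_Ici.preimage c1).inter
      ((isClosed_Ici.preimage c2).inter (isClosed_Ici.preimage c3)))
  rcases K.eq_empty_or_nonempty with hKe | hKn
  · exact ⟨1, one_pos, fun s hs h1 h2 h3 => absurd (show s ∈ K from ⟨hs, h1, h2, h3⟩)
      (by rw [hKe]; exact Set.notMem_empty s)⟩
  have hcont : ContinuousOn (fun s => ‖Γ.toFun τ - Γ.toFun s‖) K :=
    ((continuous_const.sub Γ.lipschitz.continuous).norm).continuousOn
  obtain ⟨x, hxK, hxm⟩ := hKc.exists_isMinOn hKn hcont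
  refine ⟨‖Γ.toFun τ - Γ.toFun x‖, ?_, fun s hs h1 h2 h3 => hxm ⟨hs, h1, h2, h3⟩⟩
  rcases eq_or_lt_of_le (norm_nonneg (Γ.toFun τ - Γ.toFun x)) with he | hlt
  · exfalso
    have hzx : Γ.toFun τ = Γ.toFun x := by
      have : Γ.toFun τ - Γ.toFun x = 0 := by
        rw [← norm_eq_zero]; exact he.symm
      linear_combination this
    rcases z_inj Γ hτ hxK.1 hzx with h | h | h
    · have := hxK.2.1; rw [← h] at this; simp at this; linarith
    · have := hxK.2.2.1
      have e : x - τ + Γ.S = 0 := by linarith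
      rw [e] at this; simp at this; linarith
    · have := hxK.2.2.2
      have e : x - τ - Γ.S = 0 := by linarith
      rw [e] at this; simp at this; linarith
  · exact hlt

lemma tk_factor {S : ℝ} (hS : 0 < S) {t0 : ℝ} (ht0 : t0 ∈ Set.Ioo 0 S) (d : ℝ)
    {τ : ℝ} (hτ : τ ∈ Set.Icc 0 S) :
    ∃ δ > 0, ∃ C > 0, ∀ s ∈ Set.Icc 0 S, |s - τ| ≤ δ → s ≠ τ →
      0 < |s - t0| ∧ |s - t0| ^ d ≤ C * |s - τ| ^ (if t0 = τ then d else 0) := by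
  by_cases hact : t0 = τ
  · subst hact
    refine ⟨1, one_pos, 1, one_pos, fun s hs hd hne => ?_⟩
    rw [if_pos rfl, one_mul]
    have h0 : 0 < |s - t0| := by
      rw [abs_pos, sub_ne_zero]; exact hne
    exact ⟨h0, le_refl _⟩
  · set ε := |τ - t0| / 2 with hε
    have hε0 : 0 < ε := by
      rw [hε]
      have : τ - t0 ≠ 0 := sub_ne_zero.2 (Ne.symm hact)
      have := abs_pos.2 this
      linarith
    refine ⟨ε, hε0, max (S ^ d) (ε ^ d), lt_max_of_lt_left (Real.rpow_pos_of_pos hS d),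
      fun s hs hd _ => ?_⟩
    have hlow : ε ≤ |s - t0| := by
      have htr := abs_sub_abs_le_abs_sub (τ - t0) (s - t0)
      have e : (τ - t0) - (s - t0) = τ - s := by ring
      rw [e] at htr
      have hd' : |τ - s| ≤ ε := by rw [abs_sub_comm]; exact hd
      linarith
    have hup : |s - t0| ≤ S := by
      rw [abs_le]
      constructor
      · linarith [hs.1, ht0.2]
      · linarith [hs.2, ht0.1]
    have h0 : 0 < |s - t0| := lt_of_lt_of_le hε0 hlow
    refine ⟨h0, ?_⟩
    rw [if_neg hact, Real.rpow_zero, mul_one]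
    rcases le_or_gt 0 d with hd0 | hd0
    · exact (Real.rpow_le_rpow (abs_nonneg _) hup hd0).trans (le_max_left _ _)
    · exact (Real.rpow_le_rpow_of_nonpos hε0 hlow hd0.le).trans (le_max_right _ _)

lemma sk_factor (Γ : JordanCurve) (hΓ : Γ.IsLR) {r : ℕ} {sk : ℕ → ℝ} (hsk0 : sk 0 = 0)
    (hsk : ∀ i, 1 ≤ i → i ≤ r → sk i ∈ Set.Ioo 0 Γ.S) (c : ℝ) {k : ℕ} (hk : k ≤ r)
    {τ : ℝ} (hτ : τ ∈ Set.Icc 0 Γ.S) :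
    ∃ δ > 0, ∃ C > 0, ∀ s ∈ Set.Icc 0 Γ.S, |s - τ| ≤ δ → s ≠ τ →
      0 < ‖Γ.toFun (sk k) - Γ.toFun s‖ ∧
      ‖Γ.toFun (sk k) - Γ.toFun s‖ ^ c ≤
        C * |s - τ| ^ (if sk k = τ ∨ (k = 0 ∧ τ = Γ.S) then c else 0) := by
  have hS := Γ.S_pos
  have hskm : sk k ∈ Set.Icc 0 Γ.S := by
    rcases Nat.eq_zero_or_pos k with hk0 | hk1
    · rw [hk0, hsk0]; exact ⟨le_refl 0, hS.le⟩
    · have := hsk k hk1 hk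
      exact ⟨this.1.le, this.2.le⟩
  by_cases hact : sk k = τ ∨ (k = 0 ∧ τ = Γ.S)
  · -- active case: the factor behaves like |s - τ|
    have key : ∃ δ > 0, ∀ s ∈ Set.Icc 0 Γ.S, |s - τ| ≤ δ →
        |s - τ|/2 ≤ ‖Γ.toFun (sk k) - Γ.toFun s‖ ∧
        ‖Γ.toFun (sk k) - Γ.toFun s‖ ≤ |s - τ| := by
      have hzeq : Γ.toFun (sk k) = Γ.toFun τ := by
        rcases hact with h | ⟨h0, hTS⟩
        · rw [h]
        · rw [h0, hsk0, hTS, z_periodS]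
      obtain ⟨δ, hδ, hch⟩ := chord Γ hΓ hτ
      refine ⟨δ, hδ, fun s hs hd => ?_⟩
      rw [hzeq]
      refine ⟨hch s hs hd, ?_⟩
      have := Γ.lipschitz.dist_le_mul τ s
      rw [dist_eq_norm, Real.dist_eq] at this
      simpa [abs_sub_comm τ s] using this
    obtain ⟨δ, hδ, hkey⟩ := key
    refine ⟨δ, hδ, max 1 ((1/2 : ℝ) ^ c), lt_max_of_lt_left one_pos,
      fun s hs hd hne => ?_⟩
    obtain ⟨hlow, hup⟩ := hkey s hs hd
    have habs : 0 < |s - τ| := by rw [abs_pos, sub_ne_zero]; exact hne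
    have h0 : 0 < ‖Γ.toFun (sk k) - Γ.toFun s‖ := lt_of_lt_of_le (by linarith) hlow
    refine ⟨h0, ?_⟩
    rw [if_pos hact]
    rcases le_or_gt 0 c with hc0 | hc0
    · calc ‖Γ.toFun (sk k) - Γ.toFun s‖ ^ c ≤ |s - τ| ^ c :=
            Real.rpow_le_rpow (norm_nonneg _) hup hc0
        _ ≤ max 1 ((1/2 : ℝ) ^ c) * |s - τ| ^ c := by
            nth_rewrite 1 [← one_mul (|s - τ| ^ c)]
            exact mul_le_mul_of_nonneg_right (le_max_left _ _)
              (Real.rpow_nonneg (abs_nonneg _) c)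
    · calc ‖Γ.toFun (sk k) - Γ.toFun s‖ ^ c ≤ (|s - τ|/2) ^ c := by
            refine Real.rpow_le_rpow_of_nonpos (by linarith) hlow hc0.le
        _ = (1/2 : ℝ) ^ c * |s - τ| ^ c := by
            rw [div_eq_mul_inv, mul_comm, ← Real.mul_rpow (by norm_num) (abs_nonneg _)]
            norm_num
        _ ≤ max 1 ((1/2 : ℝ) ^ c) * |s - τ| ^ c :=
            mul_le_mul_of_nonneg_right (le_max_right _ _)
              (Real.rpow_nonneg (abs_nonneg _) c)
  · -- inactive case: the factor is bounded above and below
    push_neg at hact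
    obtain ⟨hne1, hne2⟩ := hact
    have he1 : 0 < |τ - sk k| := by
      rw [abs_pos, sub_ne_zero]; exact fun h => hne1 h.symm
    have he2 : 0 < |τ - sk k + Γ.S| := by
      rw [abs_pos]
      intro hcon
      rcases Nat.eq_zero_or_pos k with hk0 | hk1
      · rw [hk0, hsk0] at hcon; linarith [hτ.1]
      · have := hsk k hk1 hk
        linarith [hτ.1, this.2]
    have he3 : 0 < |τ - sk k - Γ.S| := by
      rw [abs_pos]
      intro hcon
      rcases Nat.eq_zero_or_pos k with hk0 | hk1
      · rw [hk0, hsk0] at hcon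
        exact hne2 hk0 (by linarith [hτ.2])
      · have := hsk k hk1 hk
        linarith [hτ.2, this.1]
    set ε := min |τ - sk k| (min |τ - sk k + Γ.S| |τ - sk k - Γ.S|) / 2 with hεdef
    have hε0 : 0 < ε := by
      rw [hεdef]
      have := lt_min he2 he3
      have := lt_min he1 (lt_min he2 he3)
      linarith
    obtain ⟨m, hm0, hmfar⟩ := z_far Γ hskm hε0
    refine ⟨ε, hε0, max (Γ.S ^ c) (m ^ c),
      lt_max_of_lt_left (Real.rpow_pos_of_pos hS c), fun s hs hd _ => ?_⟩
    have hfar1 : ε ≤ |s - sk k| := by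
      have htr := abs_sub_abs_le_abs_sub (τ - sk k) (s - sk k)
      have e : (τ - sk k) - (s - sk k) = τ - s := by ring
      rw [e, abs_sub_comm τ s] at htr
      have : |τ - sk k| ≥ 2 * ε := by
        rw [hεdef]; have := min_le_left |τ - sk k| (min |τ - sk k + Γ.S| |τ - sk k - Γ.S|)
        linarith
      linarith
    have hfar2 : ε ≤ |s - sk k + Γ.S| := by
      have htr := abs_sub_abs_le_abs_sub (τ - sk k + Γ.S) (s - sk k + Γ.S)
      have e : (τ - sk k + Γ.S) - (s - sk k + Γ.S) = τ - s := by ring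
      rw [e, abs_sub_comm τ s] at htr
      have : |τ - sk k + Γ.S| ≥ 2 * ε := by
        rw [hεdef]
        have h1 := min_le_right |τ - sk k| (min |τ - sk k + Γ.S| |τ - sk k - Γ.S|)
        have h2 := min_le_left |τ - sk k + Γ.S| |τ - sk k - Γ.S|
        linarith
      linarith
    have hfar3 : ε ≤ |s - sk k - Γ.S| := by
      have htr := abs_sub_abs_le_abs_sub (τ - sk k - Γ.S) (s - sk k - Γ.S)
      have e : (τ - sk k - Γ.S) - (s - sk k - Γ.S) = τ - s := by ring
      rw [e, abs_sub_comm τ s] at htr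
      have : |τ - sk k - Γ.S| ≥ 2 * ε := by
        rw [hεdef]
        have h1 := min_le_right |τ - sk k| (min |τ - sk k + Γ.S| |τ - sk k - Γ.S|)
        have h2 := min_le_right |τ - sk k + Γ.S| |τ - sk k - Γ.S|
        linarith
      linarith
    have hlow : m ≤ ‖Γ.toFun (sk k) - Γ.toFun s‖ := hmfar s hs hfar1 hfar2 hfar3
    have hup : ‖Γ.toFun (sk k) - Γ.toFun s‖ ≤ Γ.S := by
      have := Γ.lipschitz.dist_le_mul (sk k) s
      rw [dist_eq_norm, Real.dist_eq] at this
      have habs : |sk k - s| ≤ Γ.S := by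
        rw [abs_le]
        constructor
        · linarith [hskm.1, hs.2]
        · linarith [hskm.2, hs.1]
      calc ‖Γ.toFun (sk k) - Γ.toFun s‖ ≤ 1 * |sk k - s| := this
        _ ≤ Γ.S := by linarith
    refine ⟨lt_of_lt_of_le hm0 hlow, ?_⟩
    rw [if_neg, Real.rpow_zero, mul_one]
    · rcases le_or_gt 0 c with hc0 | hc0
      · exact (Real.rpow_le_rpow (norm_nonneg _) hup hc0).trans (le_max_left _ _)
      · exact (Real.rpow_le_rpow_of_nonpos hm0 hlow hc0.le).trans (le_max_right _ _)
    · push_neg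
      exact ⟨hne1, hne2⟩

lemma bound_to_integrable {F : ℝ → ℝ} {S τ δ C E : ℝ}
    (hδ : 0 < δ) (hE : -1 < E) (hτ : τ ∈ Set.Icc 0 S)
    (hFnn : ∀ s, 0 ≤ F s)
    (hcont : ContinuousOn F ((Set.Icc 0 S ∩ Set.Icc (τ-δ) (τ+δ)) \ {τ}))
    (hFle : ∀ s ∈ Set.Icc 0 S ∩ Set.Icc (τ-δ) (τ+δ), s ≠ τ → F s ≤ C * |s - τ| ^ E) :
    MeasureTheory.IntegrableOn F (Set.Icc 0 S ∩ Set.Icc (τ-δ) (τ+δ)) := by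
  have hI : Set.Icc (0:ℝ) S ∩ Set.Icc (τ-δ) (τ+δ) = Set.Icc (max 0 (τ-δ)) (min S (τ+δ)) :=
    Set.Icc_inter_Icc
  set a' := max 0 (τ - δ) with ha'
  set b' := min S (τ + δ) with hb'
  rw [hI] at hcont hFle ⊢
  have hτ1 : a' ≤ τ := max_le hτ.1 (by linarith)
  have hτ2 : τ ≤ b' := le_min hτ.2 (by linarith)
  have hae_ne : ∀ᵐ s : ℝ ∂volume, s ≠ τ := by
    rw [ae_iff]
    have : {s : ℝ | ¬s ≠ τ} = {τ} := by ext s; simp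
    rw [this]
    exact measure_singleton τ
  have hR : MeasureTheory.IntegrableOn F (Set.Icc τ b') := by
    have hg : MeasureTheory.IntegrableOn (fun s => C * (s - τ) ^ E) (Set.Icc τ b') := by
      have i1 : IntervalIntegrable (fun x : ℝ => x ^ E) volume 0 (b' - τ) :=
        intervalIntegral.intervalIntegrable_rpow' hE
      have i2 := (i1.comp_sub_right τ).const_mul C
      rw [zero_add, sub_add_cancel] at i2
      rwa [intervalIntegrable_iff_integrableOn_Icc_of_le hτ2] at i2
    have hmeas : AEStronglyMeasurable F (volume.restrict (Set.Icc τ b')) := by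
      have h1 : ContinuousOn F (Set.Ioc τ b') := by
        refine hcont.mono fun s hs => ⟨⟨hτ1.trans hs.1.le, hs.2⟩, hs.1.ne'⟩
      have h2 := h1.aestronglyMeasurable (μ := volume) measurableSet_Ioc
      rwa [Measure.restrict_congr_set Ioc_ae_eq_Icc] at h2
    refine Integrable.mono' hg hmeas ?_
    filter_upwards [ae_restrict_mem measurableSet_Icc, ae_restrict_of_ae hae_ne]
      with s hsm hsne
    rw [Real.norm_eq_abs, _root_.abs_of_nonneg (hFnn s)]
    have h3 := hFle s ⟨hτ1.trans hsm.1, hsm.2⟩ hsne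
    rwa [_root_.abs_of_nonneg (by linarith [hsm.1] : (0:ℝ) ≤ s - τ)] at h3
  have hL : MeasureTheory.IntegrableOn F (Set.Icc a' τ) := by
    have hg : MeasureTheory.IntegrableOn (fun s => C * (τ - s) ^ E) (Set.Icc a' τ) := by
      have i1 : IntervalIntegrable (fun x : ℝ => x ^ E) volume 0 (τ - a') :=
        intervalIntegral.intervalIntegrable_rpow' hE
      have i2 := ((i1.comp_sub_left τ).const_mul C).symm
      rw [sub_zero, sub_sub_cancel] at i2
      rwa [intervalIntegrable_iff_integrableOn_Icc_of_le hτ1] at i2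
    have hmeas : AEStronglyMeasurable F (volume.restrict (Set.Icc a' τ)) := by
      have h1 : ContinuousOn F (Set.Ico a' τ) := by
        refine hcont.mono fun s hs => ⟨⟨hs.1, hs.2.le.trans hτ2⟩, hs.2.ne⟩
      have h2 := h1.aestronglyMeasurable (μ := volume) measurableSet_Ico
      rwa [Measure.restrict_congr_set Ico_ae_eq_Icc] at h2
    refine Integrable.mono' hg hmeas ?_
    filter_upwards [ae_restrict_mem measurableSet_Icc, ae_restrict_of_ae hae_ne]
      with s hsm hsne
    rw [Real.norm_eq_abs, _root_.abs_of_nonneg (hFnn s)]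
    have h3 := hFle s ⟨hsm.1, hsm.2.trans hτ2⟩ hsne
    rwa [abs_sub_comm, _root_.abs_of_nonneg (by linarith [hsm.2] : (0:ℝ) ≤ τ - s)] at h3
  have := hL.union hR
  rwa [Set.Icc_union_Icc_eq_Icc hτ1 hτ2] at this

lemma master_integrable (Γ : JordanCurve) (hΓ : Γ.IsLR) (r mw : ℕ) (sk tk : ℕ → ℝ)
    (c d : ℕ → ℝ)
    (hsk0 : sk 0 = 0) (hsk : ∀ i, 1 ≤ i → i ≤ r → sk i ∈ Set.Ioo 0 Γ.S)
    (htk : ∀ i, 1 ≤ i → i ≤ mw → tk i ∈ Set.Ioo 0 Γ.S)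
    (he : ∀ τ : ℝ, -1 < (∑ k ∈ Finset.range (r+1), if sk k = τ then c k else 0)
        + ∑ i ∈ Finset.Icc 1 mw, if tk i = τ then d i else 0) :
    MeasureTheory.IntegrableOn (fun s =>
      (∏ k ∈ Finset.range (r+1), ‖Γ.toFun (sk k) - Γ.toFun s‖ ^ c k) *
      ∏ i ∈ Finset.Icc 1 mw, |s - tk i| ^ d i) (Set.Icc 0 Γ.S) := by
  have hS := Γ.S_pos
  set F := fun s => (∏ k ∈ Finset.range (r+1), ‖Γ.toFun (sk k) - Γ.toFun s‖ ^ c k) *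
      ∏ i ∈ Finset.Icc 1 mw, |s - tk i| ^ d i with hF
  have hFnn : ∀ s, 0 ≤ F s := fun s =>
    mul_nonneg (Finset.prod_nonneg fun k _ => Real.rpow_nonneg (norm_nonneg _) _)
      (Finset.prod_nonneg fun i _ => Real.rpow_nonneg (abs_nonneg _) _)
  have local_int : ∀ τ : ℝ, ∃ δ > 0, τ ∈ Set.Icc 0 Γ.S →
      MeasureTheory.IntegrableOn F (Set.Icc 0 Γ.S ∩ Set.Icc (τ-δ) (τ+δ)) := by
    intro τ
    by_cases hτ : τ ∈ Set.Icc 0 Γ.S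
    case neg => exact ⟨1, one_pos, fun h => absurd h hτ⟩
    case pos =>
    have h1 : ∀ k : ℕ, ∃ δ > 0, ∃ C > 0, ∀ s ∈ Set.Icc 0 Γ.S, |s - τ| ≤ δ → s ≠ τ → k ≤ r →
        0 < ‖Γ.toFun (sk k) - Γ.toFun s‖ ∧
        ‖Γ.toFun (sk k) - Γ.toFun s‖ ^ (c k) ≤
          C * |s - τ| ^ (if sk k = τ ∨ (k = 0 ∧ τ = Γ.S) then c k else 0) := by
      intro k
      by_cases hk : k ≤ r
      · obtain ⟨δ, hδ, C, hC, hP⟩ := sk_factor Γ hΓ hsk0 hsk (c k) hk hτ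
        exact ⟨δ, hδ, C, hC, fun s hs hd hne _ => hP s hs hd hne⟩
      · exact ⟨1, one_pos, 1, one_pos, fun s hs hd hne hk' => absurd hk' hk⟩
    have h2 : ∀ i : ℕ, ∃ δ > 0, ∃ C > 0, ∀ s ∈ Set.Icc 0 Γ.S, |s - τ| ≤ δ → s ≠ τ →
        1 ≤ i → i ≤ mw →
        0 < |s - tk i| ∧ |s - tk i| ^ (d i) ≤ C * |s - τ| ^ (if tk i = τ then d i else 0) := by
      intro i
      by_cases hi : 1 ≤ i ∧ i ≤ mw
      · obtain ⟨δ, hδ, C, hC, hP⟩ := tk_factor hS (htk i hi.1 hi.2) (d i) hτ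
        exact ⟨δ, hδ, C, hC, fun s hs hd hne _ _ => hP s hs hd hne⟩
      · exact ⟨1, one_pos, 1, one_pos, fun s hs hd hne hi1 hi2 => absurd ⟨hi1, hi2⟩ hi⟩
    choose δ1 hδ1 C1 hC1 hP1 using h1
    choose δ2 hδ2 C2 hC2 hP2 using h2
    set δ := min ((Finset.range (r+1)).inf' ⟨0, Finset.mem_range.mpr (Nat.succ_pos r)⟩ δ1)
      ((insert (1:ℝ) ((Finset.Icc 1 mw).image δ2)).min' (Finset.insert_nonempty _ _)) with hδdef
    have hδpos : 0 < δ := by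
      rw [hδdef]
      apply lt_min
      · refine (Finset.lt_inf'_iff _).2 ?_
        exact fun k _ => hδ1 k
      · rw [Finset.lt_min'_iff]
        intro y hy
        rcases Finset.mem_insert.mp hy with h | h
        · rw [h]; exact one_pos
        · obtain ⟨i, _, rfl⟩ := Finset.mem_image.mp h
          exact hδ2 i
    have hδle1 : ∀ k ∈ Finset.range (r+1), δ ≤ δ1 k := fun k hk =>
      (min_le_left _ _).trans (Finset.inf'_le _ hk)
    have hδle2 : ∀ i ∈ Finset.Icc 1 mw, δ ≤ δ2 i := fun i hi =>
      (min_le_right _ _).trans (Finset.min'_le _ _ (Finset.mem_insert_of_mem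
        (Finset.mem_image_of_mem δ2 hi)))
    refine ⟨δ, hδpos, fun _ => ?_⟩
    set γ1 : ℕ → ℝ := fun k => if sk k = τ ∨ (k = 0 ∧ τ = Γ.S) then c k else 0 with hγ1
    set γ2 : ℕ → ℝ := fun i => if tk i = τ then d i else 0 with hγ2
    set E := (∑ k ∈ Finset.range (r+1), γ1 k) + ∑ i ∈ Finset.Icc 1 mw, γ2 i with hEdef
    have hEgt : -1 < E := by
      by_cases hτS : τ = Γ.S
      · have e1 : ∑ k ∈ Finset.range (r+1), γ1 k
            = ∑ k ∈ Finset.range (r+1), (if sk k = 0 then c k else 0) := by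
          refine Finset.sum_congr rfl fun k hk => ?_
          simp only [hγ1]
          by_cases hk0 : k = 0
          · subst hk0
            rw [if_pos (Or.inr ⟨rfl, hτS⟩), if_pos hsk0]
          · have hk1 : 1 ≤ k := Nat.one_le_iff_ne_zero.mpr hk0
            have hkr : k ≤ r := Nat.lt_succ_iff.mp (Finset.mem_range.mp hk)
            have h3 := hsk k hk1 hkr
            rw [if_neg, if_neg (ne_of_gt h3.1)]
            push_neg
            refine ⟨?_, fun h => absurd h hk0⟩
            rw [hτS]
            exact ne_of_lt h3.2
        have e2 : ∑ i ∈ Finset.Icc 1 mw, γ2 i = 0 := by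
          refine Finset.sum_eq_zero fun i hi => ?_
          obtain ⟨hi1, hi2⟩ := Finset.mem_Icc.mp hi
          simp only [hγ2]
          refine if_neg ?_
          rw [hτS]
          exact ne_of_lt (htk i hi1 hi2).2
        have e3 : ∑ i ∈ Finset.Icc 1 mw, (if tk i = (0:ℝ) then d i else 0) = 0 := by
          refine Finset.sum_eq_zero fun i hi => ?_
          obtain ⟨hi1, hi2⟩ := Finset.mem_Icc.mp hi
          exact if_neg (Ne.symm (ne_of_lt (htk i hi1 hi2).1))
        have h0 := he 0
        rw [e3] at h0
        rw [hEdef, e1, e2]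
        linarith
      · have e1 : ∀ k ∈ Finset.range (r+1), γ1 k = (if sk k = τ then c k else 0) := by
          intro k hk
          simp only [hγ1]
          by_cases h : sk k = τ
          · rw [if_pos (Or.inl h), if_pos h]
          · rw [if_neg, if_neg h]
            push_neg
            exact ⟨h, fun _ hcon => absurd hcon hτS⟩
        rw [hEdef, Finset.sum_congr rfl e1]
        exact he τ
    refine bound_to_integrable (C := (∏ k ∈ Finset.range (r+1), C1 k) * ∏ i ∈ Finset.Icc 1 mw, C2 i)
      hδpos hEgt hτ hFnn ?_ ?_
    · -- continuity
      apply ContinuousOn.mul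
      · refine continuousOn_finset_prod _ fun k hk => ?_
        refine ContinuousOn.rpow_const
          ((continuous_const.sub Γ.lipschitz.continuous).norm).continuousOn fun x hx => ?_
        left
        have hxI : x ∈ Set.Icc 0 Γ.S := hx.1.1
        have hxd : |x - τ| ≤ δ := by
          have := hx.1.2
          rw [abs_le]
          exact ⟨by linarith [this.1], by linarith [this.2]⟩
        have hxne : x ≠ τ := hx.2
        exact ne_of_gt (hP1 k x hxI (hxd.trans (hδle1 k hk)) hxne
          (Nat.lt_succ_iff.mp (Finset.mem_range.mp hk))).1
      · refine continuousOn_finset_prod _ fun i hi => ?_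
        refine ContinuousOn.rpow_const
          ((continuous_id.sub continuous_const).abs).continuousOn fun x hx => ?_
        left
        have hxI : x ∈ Set.Icc 0 Γ.S := hx.1.1
        have hxd : |x - τ| ≤ δ := by
          have := hx.1.2
          rw [abs_le]
          exact ⟨by linarith [this.1], by linarith [this.2]⟩
        obtain ⟨hi1, hi2⟩ := Finset.mem_Icc.mp hi
        exact ne_of_gt (hP2 i x hxI (hxd.trans (hδle2 i hi)) hx.2 hi1 hi2).1
    · -- the bound
      intro s hs hne
      have hsI : s ∈ Set.Icc 0 Γ.S := hs.1
      have hsd : |s - τ| ≤ δ := by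
        have := hs.2
        rw [abs_le]
        exact ⟨by linarith [this.1], by linarith [this.2]⟩
      have habs : 0 < |s - τ| := abs_pos.2 (sub_ne_zero.2 hne)
      have b1 : ∀ k ∈ Finset.range (r+1),
          ‖Γ.toFun (sk k) - Γ.toFun s‖ ^ c k ≤ C1 k * |s - τ| ^ γ1 k := fun k hk =>
        (hP1 k s hsI (hsd.trans (hδle1 k hk)) hne
          (Nat.lt_succ_iff.mp (Finset.mem_range.mp hk))).2
      have b2 : ∀ i ∈ Finset.Icc 1 mw, |s - tk i| ^ d i ≤ C2 i * |s - τ| ^ γ2 i := fun i hi =>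
        (hP2 i s hsI (hsd.trans (hδle2 i hi)) hne (Finset.mem_Icc.mp hi).1
          (Finset.mem_Icc.mp hi).2).2
      have prod1 : ∏ k ∈ Finset.range (r+1), ‖Γ.toFun (sk k) - Γ.toFun s‖ ^ c k
          ≤ ∏ k ∈ Finset.range (r+1), (C1 k * |s - τ| ^ γ1 k) :=
        Finset.prod_le_prod (fun k _ => Real.rpow_nonneg (norm_nonneg _) _) b1
      have prod2 : ∏ i ∈ Finset.Icc 1 mw, |s - tk i| ^ d i
          ≤ ∏ i ∈ Finset.Icc 1 mw, (C2 i * |s - τ| ^ γ2 i) :=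
        Finset.prod_le_prod (fun i _ => Real.rpow_nonneg (abs_nonneg _) _) b2
      calc F s ≤ (∏ k ∈ Finset.range (r+1), (C1 k * |s - τ| ^ γ1 k)) *
            ∏ i ∈ Finset.Icc 1 mw, (C2 i * |s - τ| ^ γ2 i) := by
            refine mul_le_mul prod1 prod2
              (Finset.prod_nonneg fun i _ => Real.rpow_nonneg (abs_nonneg _) _)
              (Finset.prod_nonneg fun k _ =>
                mul_nonneg (hC1 k).le (Real.rpow_nonneg (abs_nonneg _) _))
        _ = ((∏ k ∈ Finset.range (r+1), C1 k) * ∏ i ∈ Finset.Icc 1 mw, C2 i) * |s - τ| ^ E := by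
            rw [Finset.prod_mul_distrib, Finset.prod_mul_distrib,
              ← Real.rpow_sum_of_pos habs, ← Real.rpow_sum_of_pos habs,
              hEdef, Real.rpow_add habs]
            ring
  choose δf hδf hIf using local_int
  obtain ⟨t, ht⟩ := isCompact_Icc.elim_finite_subcover
    (fun τ : {x // x ∈ Set.Icc 0 Γ.S} => Set.Ioo (τ.1 - δf τ.1) (τ.1 + δf τ.1))
    (fun τ => isOpen_Ioo)
    (fun s hs => Set.mem_iUnion.2 ⟨⟨s, hs⟩, by
      constructor <;> [linarith [hδf s]; linarith [hδf s]]⟩)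
  have hsub : Set.Icc 0 Γ.S ⊆
      ⋃ τ ∈ t, (Set.Icc 0 Γ.S ∩ Set.Icc (τ.1 - δf τ.1) (τ.1 + δf τ.1)) := by
    intro s hs
    obtain ⟨τ, hτt, hsτ⟩ := Set.mem_iUnion₂.mp (ht hs)
    exact Set.mem_iUnion₂.mpr ⟨τ, hτt, hs, hsτ.1.le, hsτ.2.le⟩
  refine MeasureTheory.IntegrableOn.mono_set ?_ hsub
  rw [MeasureTheory.integrableOn_finset_iUnion]
  exact fun τ _ => hIf τ.1 τ.2

/-- (Example 4.1.)  For a power weight `ρ(z(s)) = Π |s - t_k|^{α_k}` on a curve of class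
`LR`, if the combined exponents satisfy `-1 < β_k < p/q` at every singular point, then
the weight `ρ` satisfies condition α). -/
theorem beta_cond_implies_cond_alpha
    (p q : ℝ) (hp : 1 < p) (hq : q = p / (p - 1))
    (Γ : JordanCurve) (hΓ : Γ.IsLR)
    (θ : ℝ → ℝ) (r : ℕ) (sk h : ℕ → ℝ)
    (hjumps : HasJumpData θ Γ.S r sk h)
    (ρ : ℂ → ℝ) (mw : ℕ) (tk ak : ℕ → ℝ) (hpw : IsPowerWeight Γ ρ mw tk ak)
    (hbeta : BetaCond p q r sk h mw tk ak) :
    CondAlpha Γ ρ p q r sk h := by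
  obtain ⟨htkm, htkinj, hρ⟩ := hpw
  have hS := Γ.S_pos
  have hπ : (0:ℝ) < Real.pi := Real.pi_pos
  have hp0 : (0:ℝ) < p := by linarith
  have hq0 : (0:ℝ) < q := by rw [hq]; apply div_pos hp0; linarith
  have hqp : (0:ℝ) < q / p := div_pos hq0 hp0
  set β : ℝ → ℝ := betaExp p r sk h mw tk ak with hβ
  set T : Finset ℝ := (Finset.range (r+1)).image sk ∪ (Finset.Icc 1 mw).image tk with hT
  have hTne : T.Nonempty := ⟨sk 0, by
    rw [hT]
    exact Finset.mem_union_left _ (Finset.mem_image_of_mem sk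
      (Finset.mem_range.mpr (Nat.succ_pos r)))⟩
  have hsing : ∀ τ ∈ T, (∃ i ≤ r, sk i = τ) ∨ (∃ i, 1 ≤ i ∧ i ≤ mw ∧ tk i = τ) := by
    intro τ hτ
    rw [hT, Finset.mem_union] at hτ
    rcases hτ with hτ | hτ
    · obtain ⟨i, hi, rfl⟩ := Finset.mem_image.mp hτ
      exact Or.inl ⟨i, Nat.lt_succ_iff.mp (Finset.mem_range.mp hi), rfl⟩
    · obtain ⟨i, hi, rfl⟩ := Finset.mem_image.mp hτ
      obtain ⟨hi1, hi2⟩ := Finset.mem_Icc.mp hi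
      exact Or.inr ⟨i, hi1, hi2, rfl⟩
  have hkey : ∀ τ : ℝ, β τ = 0 ∨ τ ∈ T := by
    intro τ
    by_cases hτ : τ ∈ T
    · exact Or.inr hτ
    · left
      rw [hβ, betaExp]
      have e1 : (∑ i ∈ Finset.range (r+1), if sk i = τ then h i else 0) = 0 := by
        refine Finset.sum_eq_zero fun i hi => if_neg fun hcon => hτ ?_
        rw [hT]
        exact Finset.mem_union_left _ (hcon ▸ Finset.mem_image_of_mem sk hi)
      have e2 : (∑ i ∈ Finset.Icc 1 mw, if tk i = τ then ak i else 0) = 0 := by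
        refine Finset.sum_eq_zero fun i hi => if_neg fun hcon => hτ ?_
        rw [hT]
        exact Finset.mem_union_right _ (hcon ▸ Finset.mem_image_of_mem tk hi)
      rw [e1, e2, mul_zero, add_zero]
  set W : Finset ℝ := T.image β with hW
  have hWne : W.Nonempty := hTne.image β
  set b₁ : ℝ := min 0 (W.min' hWne) with hb₁
  have hb₁le : ∀ τ ∈ T, b₁ ≤ β τ := fun τ hτ =>
    (min_le_right _ _).trans (W.min'_le (β τ) (Finset.mem_image_of_mem β hτ))
  have hb₁0 : b₁ ≤ 0 := min_le_left _ _
  have hb₁gt : -1 < b₁ := by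
    obtain ⟨τ₀, hτ₀, he⟩ := Finset.mem_image.mp (W.min'_mem hWne)
    have := (hbeta τ₀ (hsing τ₀ hτ₀)).1
    rw [hb₁]
    exact lt_min (by norm_num) (he ▸ this)
  set p₁ : ℝ := (3 + b₁)/2 with hp₁def
  have hp₁ : 1 < p₁ := by rw [hp₁def]; linarith
  have hp₁b : ∀ τ : ℝ, -1 < p₁ * β τ := by
    intro τ
    rcases hkey τ with h0 | hτT
    · rw [h0, mul_zero]; norm_num
    · have h1 : p₁ * b₁ ≤ p₁ * β τ :=
        mul_le_mul_of_nonneg_left (hb₁le τ hτT) (by linarith)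
      have h2 : -1 < p₁ * b₁ := by
        rw [hp₁def]
        nlinarith [mul_pos (by linarith : (0:ℝ) < b₁ + 1) (by linarith : (0:ℝ) < b₁ + 2)]
      linarith
  set b₂ : ℝ := max 0 (W.max' hWne) with hb₂
  have hb₂ge : ∀ τ ∈ T, β τ ≤ b₂ := fun τ hτ =>
    (W.le_max' (β τ) (Finset.mem_image_of_mem β hτ)).trans (le_max_right _ _)
  have hb₂0 : 0 ≤ b₂ := le_max_left _ _
  have hqppq : q / p * (p / q) = 1 := by
    field_simp
  have hb₂lt : q / p * b₂ < 1 := by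
    rcases max_choice 0 (W.max' hWne) with hm | hm <;> rw [hb₂, hm]
    · simp
    · obtain ⟨τ₀, hτ₀, he⟩ := Finset.mem_image.mp (W.max'_mem hWne)
      have h2 := (hbeta τ₀ (hsing τ₀ hτ₀)).2
      calc q / p * W.max' hWne < q / p * (p / q) := by
            rw [← he]
            exact mul_lt_mul_of_pos_left h2 hqp
        _ = 1 := hqppq
  set B : ℝ := q / p * b₂ with hBdef
  have hB0 : 0 ≤ B := mul_nonneg hqp.le hb₂0
  set p₂ : ℝ := (3 - B)/2 with hp₂def
  have hp₂ : 1 < p₂ := by rw [hp₂def]; linarith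
  have hp₂b : ∀ τ : ℝ, q / p * p₂ * β τ < 1 := by
    intro τ
    rcases hkey τ with h0 | hτT
    · rw [h0, mul_zero]; norm_num
    · have h1 : q / p * β τ ≤ B := by
        rw [hBdef]
        exact mul_le_mul_of_nonneg_left (hb₂ge τ hτT) hqp.le
      have h2 : q / p * p₂ * β τ = p₂ * (q / p * β τ) := by ring
      rcases le_or_gt (q / p * β τ) 0 with h3 | h3
      · rw [h2]
        nlinarith
      · have h4 : p₂ * (q / p * β τ) ≤ p₂ * B :=
          mul_le_mul_of_nonneg_left h1 (by linarith)
        have h5 : p₂ * B < 1 := by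
          rw [hp₂def]
          nlinarith [mul_pos (by linarith : (0:ℝ) < 1 - B) (by linarith : (0:ℝ) < 2 - B)]
        rw [h2]
        linarith
  refine ⟨p₁, p₂, hp₁, hp₂, ?_, ?_⟩
  · -- first integral
    have he₁ : ∀ τ : ℝ, -1 <
        (∑ k ∈ Finset.range (r+1), if sk k = τ then (-(h k)/(2*Real.pi)) * (p*p₁) else 0)
        + ∑ i ∈ Finset.Icc 1 mw, if tk i = τ then ak i * p₁ else 0 := by
      intro τ
      have hsum : (∑ k ∈ Finset.range (r+1),
            if sk k = τ then (-(h k)/(2*Real.pi)) * (p*p₁) else 0)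
          + (∑ i ∈ Finset.Icc 1 mw, if tk i = τ then ak i * p₁ else 0) = p₁ * β τ := by
        rw [hβ, betaExp, mul_add, ← mul_assoc, Finset.mul_sum, Finset.mul_sum]
        congr 1
        · refine Finset.sum_congr rfl fun k _ => ?_
          split <;> ring
        · refine Finset.sum_congr rfl fun i _ => ?_
          split <;> ring
      rw [hsum]
      exact hp₁b τ
    have hint := master_integrable Γ hΓ r mw sk tk
      (fun k => (-(h k)/(2*Real.pi)) * (p*p₁)) (fun i => ak i * p₁)
      hjumps.sk_zero hjumps.mem htkm he₁
    refine hint.congr_fun ?_ measurableSet_Icc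
    intro s hs
    simp only
    rw [sigmaWeight, hρ s hs]
    congr 1
    · rw [← Real.finset_prod_rpow _ _
        (fun k _ => Real.rpow_nonneg (norm_nonneg _) _) (p * p₁)]
      refine Finset.prod_congr rfl fun k _ => ?_
      rw [← Real.rpow_mul (norm_nonneg _)]
    · rw [← Real.finset_prod_rpow _ _
        (fun i _ => Real.rpow_nonneg (abs_nonneg _) _) p₁]
      refine Finset.prod_congr rfl fun i _ => ?_
      rw [← Real.rpow_mul (abs_nonneg _)]
  · -- second integral
    have he₂ : ∀ τ : ℝ, -1 <
        (∑ k ∈ Finset.range (r+1), if sk k = τ then (-(h k)/(2*Real.pi)) * (-(q*p₂)) else 0)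
        + ∑ i ∈ Finset.Icc 1 mw, if tk i = τ then ak i * (-(q/p) * p₂) else 0 := by
      intro τ
      have hpne : p ≠ 0 := hp0.ne'
      have hsum : (∑ k ∈ Finset.range (r+1),
            if sk k = τ then (-(h k)/(2*Real.pi)) * (-(q*p₂)) else 0)
          + (∑ i ∈ Finset.Icc 1 mw, if tk i = τ then ak i * (-(q/p) * p₂) else 0)
          = (-(q/p) * p₂) * β τ := by
        rw [hβ, betaExp, mul_add, ← mul_assoc, Finset.mul_sum, Finset.mul_sum]
        congr 1
        · refine Finset.sum_congr rfl fun k _ => ?_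
          split
          · field_simp
          · ring
        · refine Finset.sum_congr rfl fun i _ => ?_
          split <;> ring
      rw [hsum]
      have := hp₂b τ
      nlinarith [hp₂b τ]
    have hint := master_integrable Γ hΓ r mw sk tk
      (fun k => (-(h k)/(2*Real.pi)) * (-(q*p₂))) (fun i => ak i * (-(q/p) * p₂))
      hjumps.sk_zero hjumps.mem htkm he₂
    refine hint.congr_fun ?_ measurableSet_Icc
    intro s hs
    simp only
    rw [sigmaWeight, hρ s hs]
    congr 1
    · rw [← Real.finset_prod_rpow _ _
        (fun k _ => Real.rpow_nonneg (norm_nonneg _) _) (-(q * p₂))]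
      refine Finset.prod_congr rfl fun k _ => ?_
      rw [← Real.rpow_mul (norm_nonneg _)]
    · rw [← Real.finset_prod_rpow _ _
        (fun i _ => Real.rpow_nonneg (abs_nonneg _) _) (-(q/p) * p₂)]
      refine Finset.prod_congr rfl fun i _ => ?_
      rw [← Real.rpow_mul (abs_nonneg _)]
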